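/- arXiv:2002.01826 — 3 statements merged into one kernel-verified Lean document; each statement's English description precedes it below -/
import Mathlib

section
/- Let K ≥ 2 and let Φ : ℝ^K → ℝ^K be defined by Φ_k(x) = γ_{k−1}·(e^(−(x_k−x_{k−1})) − 1) − γ_k·(e^(−(x_{k+1}−x_k)) − 1), where γ_k = k·(K−k)/2 and γ₀ = γ_K = 0. Let e₁ = (1/√K)·(1, …, 1) ∈ ℝ^K. For every M > 0 there exists C(M) > 0 such that for every t₀ > 0 and every differentiable function ϖ : [t₀, ∞) → ℝ^K satisfying ϖ'(t) = t^(−1)·Φ(ϖ(t)) for all t ≥ t₀ and ‖ϖ(t₀)‖ ≤ M, one has for all t ≥ t₀: ‖ϖ(t) − (ϖ(t₀), e₁)·e₁‖ ≤ C(M)·t₀/t, where (·,·) and ‖·‖ denote the Euclidean inner product and norm on ℝ^K. -/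
/-- The coefficients `γ_k = k (K - k) / 2`. -/
noncomputable def γcoef (K k : ℕ) : ℝ := (k : ℝ) * ((K : ℝ) - (k : ℝ)) / 2

/-- The interaction map `Φ : ℝ^K → ℝ^K` (written in `0`-based indexing; the boundary
terms carry the vanishing coefficients `γ₀ = γ_K = 0`). -/
noncomputable def Phi (K : ℕ) (x : Fin K → ℝ) : Fin K → ℝ := fun i =>
  let x' : ℕ → ℝ := fun n => if h : n < K then x ⟨n, h⟩ else 0
  γcoef K i * (Real.exp (-(x' i - x' ((i : ℕ) - 1))) - 1) -
    γcoef K ((i : ℕ) + 1) * (Real.exp (-(x' ((i : ℕ) + 1) - x' i)) - 1)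

open Finset Set
namespace USC

noncomputable def xe (K : ℕ) (x : Fin K → ℝ) : ℕ → ℝ := fun n => if h : n < K then x ⟨n, h⟩ else 0

noncomputable def dd (K : ℕ) (x : Fin K → ℝ) (j : ℕ) : ℝ := xe K x j - xe K x (j - 1)

noncomputable def gg (K : ℕ) (x : Fin K → ℝ) (j : ℕ) : ℝ :=
  γcoef K j * (Real.exp (-(dd K x j)) - 1)

lemma xe_lt (K : ℕ) (x : Fin K → ℝ) {n : ℕ} (h : n < K) : xe K x n = x ⟨n, h⟩ := dif_pos h

lemma xe_coe (K : ℕ) (x : Fin K → ℝ) (i : Fin K) : xe K x i = x i := by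
  rw [xe_lt K x i.isLt]

lemma γ0 (K : ℕ) : γcoef K 0 = 0 := by simp [γcoef]

lemma γK (K : ℕ) : γcoef K K = 0 := by simp [γcoef]

lemma γnonneg (K j : ℕ) (hj : j ≤ K) : 0 ≤ γcoef K j := by
  unfold γcoef
  have : (0:ℝ) ≤ (K:ℝ) - j := by
    have := Nat.cast_le (α := ℝ).2 hj; linarith
  positivity

lemma dd_zero (K : ℕ) (x : Fin K → ℝ) : dd K x 0 = 0 := by simp [dd]

lemma gg_zero (K : ℕ) (x : Fin K → ℝ) : gg K x 0 = 0 := by simp [gg, γ0]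

lemma gg_K (K : ℕ) (x : Fin K → ℝ) : gg K x K = 0 := by simp [gg, γK]

lemma Phi_eq (K : ℕ) (x : Fin K → ℝ) (i : Fin K) :
    Phi K x i = gg K x i - gg K x (i + 1) := by
  simp only [Phi, gg, dd, xe]
  norm_num

lemma sum_Phi (K : ℕ) (x : Fin K → ℝ) : ∑ i : Fin K, Phi K x i = 0 := by
  have h : ∑ i : Fin K, Phi K x i
      = ∑ i : Fin K, (fun n => gg K x n - gg K x (n + 1)) (i : ℕ) :=
    Finset.sum_congr rfl (fun i _ => Phi_eq K x i)
  rw [h, Fin.sum_univ_eq_sum_range (fun n => gg K x n - gg K x (n + 1)) K,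
    Finset.sum_range_sub' (gg K x), gg_zero, gg_K, sub_zero]

lemma sum_x_Phi (K : ℕ) (x : Fin K → ℝ) :
    ∑ i : Fin K, x i * Phi K x i = ∑ j ∈ range K, dd K x j * gg K x j := by
  have h1 : ∑ i : Fin K, x i * Phi K x i
      = ∑ n ∈ range K, xe K x n * (gg K x n - gg K x (n + 1)) := by
    rw [← Fin.sum_univ_eq_sum_range (fun n => xe K x n * (gg K x n - gg K x (n + 1))) K]
    refine Finset.sum_congr rfl fun i _ => ?_
    rw [Phi_eq, xe_coe]
  rw [h1]
  have h2 : ∑ n ∈ range K, xe K x n * gg K x (n + 1)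
      = ∑ n ∈ range K, xe K x (n - 1) * gg K x n := by
    have e2 := Finset.sum_range_succ' (fun m => xe K x (m - 1) * gg K x m) K
    have e3 := Finset.sum_range_succ (fun m => xe K x (m - 1) * gg K x m) K
    simp only [Nat.add_sub_cancel, gg_zero, gg_K, mul_zero, add_zero] at e2 e3
    exact e2.symm.trans e3
  calc ∑ n ∈ range K, xe K x n * (gg K x n - gg K x (n + 1))
      = ∑ n ∈ range K, (xe K x n * gg K x n - xe K x n * gg K x (n + 1)) := by
        refine Finset.sum_congr rfl fun n _ => by ring
    _ = ∑ n ∈ range K, xe K x n * gg K x n - ∑ n ∈ range K, xe K x n * gg K x (n + 1) := by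
        rw [Finset.sum_sub_distrib]
    _ = ∑ n ∈ range K, xe K x n * gg K x n - ∑ n ∈ range K, xe K x (n - 1) * gg K x n := by
        rw [h2]
    _ = ∑ j ∈ range K, dd K x j * gg K x j := by
        rw [← Finset.sum_sub_distrib]
        refine Finset.sum_congr rfl fun n _ => ?_
        simp only [dd]; ring

variable {K : ℕ}

lemma sum_range_cast (n : ℕ) : ∑ i ∈ range n, (i : ℝ) = ((n : ℝ) ^ 2 - n) / 2 := by
  induction n with
  | zero => simp
  | succ n ih => rw [Finset.sum_range_succ, ih]; push_cast; ring

lemma tele (X : ℕ → ℝ) (D : ℕ → ℝ) (hD : ∀ j, D j = X j - X (j - 1)) {i l : ℕ} (h : i ≤ l) :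
    ∑ j ∈ Finset.Ioc i l, D j = X l - X i := by
  induction l, h using Nat.le_induction with
  | base => simp
  | succ l hl ih =>
    rw [Finset.sum_Ioc_succ_top (by omega), ih, hD (l + 1)]
    simp

lemma pb1 (X : ℕ → ℝ) (D : ℕ → ℝ) (hD : ∀ j, D j = X j - X (j - 1)) {i l : ℕ}
    (h : i ≤ l) (hl : l < K) :
    (X l - X i) ^ 2 ≤ ∑ j ∈ range K, (if i < j ∧ j ≤ l then (l : ℝ) - i else 0) * D j ^ 2 := by
  have h1 : (X l - X i) ^ 2 = (∑ j ∈ Finset.Ioc i l, D j) ^ 2 := by rw [tele X D hD h]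
  have h2 : (∑ j ∈ Finset.Ioc i l, D j) ^ 2
      ≤ (Finset.Ioc i l).card * ∑ j ∈ Finset.Ioc i l, D j ^ 2 :=
    sq_sum_le_card_mul_sum_sq
  have hcard : ((Finset.Ioc i l).card : ℝ) = (l : ℝ) - i := by
    rw [Nat.card_Ioc]; exact Nat.cast_sub h
  have hfil : Finset.Ioc i l = (range K).filter (fun j => i < j ∧ j ≤ l) := by
    ext j; simp only [Finset.mem_Ioc, Finset.mem_filter, Finset.mem_range]; omega
  have h3 : ∑ j ∈ range K, (if i < j ∧ j ≤ l then (l : ℝ) - i else 0) * D j ^ 2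
      = ∑ j ∈ Finset.Ioc i l, ((l : ℝ) - i) * D j ^ 2 := by
    rw [hfil, Finset.sum_filter]
    exact Finset.sum_congr rfl fun j _ => by rw [ite_mul, zero_mul]
  rw [h1, h3, ← Finset.mul_sum, ← hcard]
  exact h2

lemma count {j : ℕ} (hj : j < K) :
    ∑ i ∈ range K, ∑ l ∈ range K, (if i < j ∧ j ≤ l then (l : ℝ) - i else 0)
      = (K : ℝ) * j * ((K : ℝ) - j) / 2 := by
  have hSL : ∑ l ∈ Finset.Ico j K, (l : ℝ) = ((K:ℝ)^2 - K)/2 - ((j:ℝ)^2 - j)/2 := by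
    rw [Finset.sum_Ico_eq_sub _ hj.le, sum_range_cast, sum_range_cast]
  have hinner : ∀ i : ℕ, i < j →
      (∑ l ∈ range K, (if i < j ∧ j ≤ l then (l : ℝ) - i else 0))
        = (((K:ℝ)^2 - K)/2 - ((j:ℝ)^2 - j)/2) - ((K:ℝ) - j) * i := by
    intro i hij
    have hfil : (range K).filter (fun l => j ≤ l) = Finset.Ico j K := by
      ext l; simp only [Finset.mem_Ico, Finset.mem_filter, Finset.mem_range]; omega
    have : ∑ l ∈ range K, (if i < j ∧ j ≤ l then (l : ℝ) - i else 0)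
        = ∑ l ∈ Finset.Ico j K, ((l : ℝ) - i) := by
      rw [← hfil, Finset.sum_filter]
      exact Finset.sum_congr rfl fun l _ => by
        by_cases h : j ≤ l <;> simp [h, hij]
    rw [this, Finset.sum_sub_distrib, Finset.sum_const, Nat.card_Ico, hSL, nsmul_eq_mul]
    rw [Nat.cast_sub hj.le]
  have houter : ∑ i ∈ range K, ∑ l ∈ range K, (if i < j ∧ j ≤ l then (l : ℝ) - i else 0)
      = ∑ i ∈ range j, ((((K:ℝ)^2 - K)/2 - ((j:ℝ)^2 - j)/2) - ((K:ℝ) - j) * i) := by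
    rw [← Finset.sum_subset (Finset.range_subset_range.2 hj.le)]
    · exact Finset.sum_congr rfl fun i hi => hinner i (Finset.mem_range.1 hi)
    · intro i _ hi
      rw [Finset.mem_range, not_lt] at hi
      exact Finset.sum_eq_zero fun l _ => by
        have : ¬ (i < j ∧ j ≤ l) := by omega
        simp [this]
  rw [houter, Finset.sum_sub_distrib, Finset.sum_const, Finset.card_range, ← Finset.mul_sum,
    sum_range_cast, nsmul_eq_mul]
  ring


lemma pairbound (X : ℕ → ℝ) (D : ℕ → ℝ) (hD : ∀ j, D j = X j - X (j - 1)) {i l : ℕ}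
    (hi : i < K) (hl : l < K) :
    (X l - X i) ^ 2 ≤ ∑ j ∈ range K,
      ((if i < j ∧ j ≤ l then (l : ℝ) - i else 0) + (if l < j ∧ j ≤ i then (i : ℝ) - l else 0))
        * D j ^ 2 := by
  have expand : ∀ j, ((if i < j ∧ j ≤ l then (l : ℝ) - i else 0)
      + (if l < j ∧ j ≤ i then (i : ℝ) - l else 0)) * D j ^ 2
      = (if i < j ∧ j ≤ l then (l : ℝ) - i else 0) * D j ^ 2
        + (if l < j ∧ j ≤ i then (i : ℝ) - l else 0) * D j ^ 2 := fun j => by ring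
  rw [Finset.sum_congr rfl fun j _ => expand j, Finset.sum_add_distrib]
  rcases le_total i l with h | h
  · have hz : ∑ j ∈ range K, (if l < j ∧ j ≤ i then (i : ℝ) - l else 0) * D j ^ 2 = 0 :=
      Finset.sum_eq_zero fun j _ => by
        have : ¬ (l < j ∧ j ≤ i) := by omega
        simp [this]
    rw [hz, add_zero]
    exact pb1 X D hD h hl
  · have hz : ∑ j ∈ range K, (if i < j ∧ j ≤ l then (l : ℝ) - i else 0) * D j ^ 2 = 0 :=
      Finset.sum_eq_zero fun j _ => by
        have : ¬ (i < j ∧ j ≤ l) := by omega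
        simp [this]
    rw [hz, zero_add]
    have := pb1 X D hD h hi
    calc (X l - X i) ^ 2 = (X i - X l) ^ 2 := by ring
      _ ≤ _ := this

lemma count2 {j : ℕ} (hj : j < K) :
    ∑ i ∈ range K, ∑ l ∈ range K,
      ((if i < j ∧ j ≤ l then (l : ℝ) - i else 0) + (if l < j ∧ j ≤ i then (i : ℝ) - l else 0))
      = (K : ℝ) * j * ((K : ℝ) - j) := by
  rw [Finset.sum_congr rfl fun i _ => Finset.sum_add_distrib, Finset.sum_add_distrib]
  have swap : ∑ i ∈ range K, ∑ l ∈ range K, (if l < j ∧ j ≤ i then (i : ℝ) - l else 0)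
      = ∑ i ∈ range K, ∑ l ∈ range K, (if i < j ∧ j ≤ l then (l : ℝ) - i else 0) := by
    rw [Finset.sum_comm]
  rw [swap, count hj]
  ring

/-- The sharp weighted Poincaré inequality. -/
lemma poincare (hK : 0 < K) (X : ℕ → ℝ) (D : ℕ → ℝ) (hD : ∀ j, D j = X j - X (j - 1)) :
    ∑ i ∈ range K, (X i - (∑ n ∈ range K, X n) / K) ^ 2
      ≤ ∑ j ∈ range K, ((j : ℝ) * ((K : ℝ) - j) / 2) * D j ^ 2 := by
  set S := ∑ n ∈ range K, X n with hS
  have hK0 : (0:ℝ) < (K:ℝ) := by exact_mod_cast hK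
  -- Step A
  have stepA : 2 * (K : ℝ) * ∑ i ∈ range K, (X i - S / K) ^ 2
      = ∑ i ∈ range K, ∑ l ∈ range K, (X l - X i) ^ 2 := by
    have e1 : ∑ i ∈ range K, (X i - S / K) ^ 2
        = ∑ i ∈ range K, X i ^ 2 - S ^ 2 / K := by
      have : ∀ i ∈ range K, (X i - S / K) ^ 2
          = X i ^ 2 - (2 * S / K) * X i + (S / K) ^ 2 := fun i _ => by ring
      rw [Finset.sum_congr rfl this, Finset.sum_add_distrib, Finset.sum_sub_distrib,
        ← Finset.mul_sum, Finset.sum_const, Finset.card_range, nsmul_eq_mul, ← hS]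
      field_simp
      ring
    have e2 : ∀ i ∈ range K, ∑ l ∈ range K, (X l - X i) ^ 2
        = ∑ l ∈ range K, X l ^ 2 - (2 * S) * X i + (K : ℝ) * X i ^ 2 := by
      intro i _
      have : ∀ l ∈ range K, (X l - X i) ^ 2
          = X l ^ 2 - (2 * X i) * X l + X i ^ 2 := fun l _ => by ring
      rw [Finset.sum_congr rfl this, Finset.sum_add_distrib, Finset.sum_sub_distrib,
        ← Finset.mul_sum, Finset.sum_const, Finset.card_range, nsmul_eq_mul, ← hS]
      ring
    rw [Finset.sum_congr rfl e2, Finset.sum_add_distrib, Finset.sum_sub_distrib,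
      Finset.sum_const, Finset.card_range, nsmul_eq_mul, ← Finset.mul_sum, ← Finset.mul_sum,
      ← hS, e1]
    field_simp
    try ring
  -- Step B : bound the double sum
  have stepB : ∑ i ∈ range K, ∑ l ∈ range K, (X l - X i) ^ 2
      ≤ ∑ i ∈ range K, ∑ l ∈ range K, ∑ j ∈ range K,
        ((if i < j ∧ j ≤ l then (l : ℝ) - i else 0)
          + (if l < j ∧ j ≤ i then (i : ℝ) - l else 0)) * D j ^ 2 := by
    refine Finset.sum_le_sum fun i hi => Finset.sum_le_sum fun l hl => ?_
    exact pairbound X D hD (Finset.mem_range.1 hi) (Finset.mem_range.1 hl)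
  -- Step C : exchange and count
  have stepC : ∑ i ∈ range K, ∑ l ∈ range K, ∑ j ∈ range K,
        ((if i < j ∧ j ≤ l then (l : ℝ) - i else 0)
          + (if l < j ∧ j ≤ i then (i : ℝ) - l else 0)) * D j ^ 2
      = ∑ j ∈ range K, ((K : ℝ) * j * ((K : ℝ) - j)) * D j ^ 2 := by
    have sw1 : ∀ i ∈ range K, ∑ l ∈ range K, ∑ j ∈ range K,
        ((if i < j ∧ j ≤ l then (l : ℝ) - i else 0)
          + (if l < j ∧ j ≤ i then (i : ℝ) - l else 0)) * D j ^ 2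
        = ∑ j ∈ range K, ∑ l ∈ range K,
        ((if i < j ∧ j ≤ l then (l : ℝ) - i else 0)
          + (if l < j ∧ j ≤ i then (i : ℝ) - l else 0)) * D j ^ 2 := fun i _ =>
      Finset.sum_comm
    rw [Finset.sum_congr rfl sw1, Finset.sum_comm]
    refine Finset.sum_congr rfl fun j hj => ?_
    rw [← count2 (Finset.mem_range.1 hj), Finset.sum_mul]
    exact Finset.sum_congr rfl fun i _ => by rw [Finset.sum_mul]
  -- combine
  have final : 2 * (K : ℝ) * ∑ i ∈ range K, (X i - S / K) ^ 2
      ≤ 2 * (K : ℝ) * ∑ j ∈ range K, ((j : ℝ) * ((K : ℝ) - j) / 2) * D j ^ 2 := by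
    rw [stepA]
    refine (stepB.trans (le_of_eq ?_))
    rw [stepC, Finset.mul_sum]
    exact Finset.sum_congr rfl fun j _ => by ring
  have h2K : (0:ℝ) < 2 * (K:ℝ) := by linarith
  exact le_of_mul_le_mul_left final h2K


lemma expineq0 (d : ℝ) : (Real.exp (-d) - 1) * d ≤ 0 := by
  rcases le_or_gt 0 d with h | h
  · have h1 : Real.exp (-d) ≤ 1 := Real.exp_le_one_iff.2 (by linarith)
    exact mul_nonpos_of_nonpos_of_nonneg (by linarith) h
  · have h1 : 1 ≤ Real.exp (-d) := Real.one_le_exp_iff.2 (by linarith)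
    exact mul_nonpos_of_nonneg_of_nonpos (by linarith) h.le

lemma expineq1 (L : ℝ) (hL : 0 < L) (d : ℝ) (hd : |d| ≤ L) :
    (Real.exp (-d) - 1) * d ≤ -((1 - Real.exp (-L)) / L) * d ^ 2 := by
  set g := (1 - Real.exp (-L)) / L with hg
  have hg1 : g ≤ 1 := by
    rw [hg, div_le_one hL]
    nlinarith [Real.add_one_le_exp (-L)]
  rcases le_or_gt d 0 with h | h
  · have h1 : -d ≤ Real.exp (-d) - 1 := by nlinarith [Real.add_one_le_exp (-d)]
    have h2 : (Real.exp (-d) - 1) * d ≤ -d * d := mul_le_mul_of_nonpos_right h1 h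
    nlinarith [sq_nonneg d]
  · have hdL : d ≤ L := le_trans (le_abs_self d) hd
    have key : Real.exp (-d) ≤ 1 - g * d := by
      have hcvx := convexOn_exp.2 (Set.mem_univ (0:ℝ)) (Set.mem_univ (-L))
        (show (0:ℝ) ≤ (L - d) / L from div_nonneg (by linarith) hL.le) (show (0:ℝ) ≤ d / L from div_nonneg h.le hL.le)
        (show (L - d) / L + d / L = 1 by field_simp; ring)
      simp only [smul_eq_mul, mul_zero, zero_add, Real.exp_zero, mul_one] at hcvx
      have harg : d / L * -L = -d := by field_simp
      rw [harg] at hcvx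
      calc Real.exp (-d) ≤ (L - d) / L + d / L * Real.exp (-L) := hcvx
        _ = 1 - g * d := by rw [hg]; field_simp; ring
    nlinarith [key, h.le]

lemma expineq2 (b d : ℝ) (hb : 0 ≤ b) (hd : |d| ≤ 2 * b) :
    (Real.exp (-d) - 1) * d ≤ -(1 - 2 * b) * d ^ 2 := by
  rcases le_or_gt d 0 with h | h
  · have h1 : -d ≤ Real.exp (-d) - 1 := by nlinarith [Real.add_one_le_exp (-d)]
    have h2 : (Real.exp (-d) - 1) * d ≤ -d * d := mul_le_mul_of_nonpos_right h1 h
    nlinarith [sq_nonneg d]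
  · have hd2 : d ≤ 2 * b := le_trans (le_abs_self d) hd
    have hX : Real.exp (-d) * (d + 1) ≤ 1 := by
      have h1 := Real.add_one_le_exp d
      have h2 : Real.exp (-d) * Real.exp d = 1 := by
        rw [← Real.exp_add]; simp
      nlinarith [Real.exp_pos (-d)]
    have hlb : 1 - d ≤ Real.exp (-d) := by nlinarith [Real.add_one_le_exp (-d)]
    nlinarith [mul_le_mul_of_nonneg_right hX h.le,
      mul_le_mul_of_nonneg_right hlb (sq_nonneg d), sq_nonneg d, Real.exp_pos (-d)]

end USC

open USC Finset Set

set_option maxHeartbeats 1600000 in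
theorem unperturbed_system_convergence (K : ℕ) (hK : 2 ≤ K) :
    ∀ M > (0 : ℝ), ∃ C > (0 : ℝ), ∀ t₀ > (0 : ℝ), ∀ ϖ : ℝ → Fin K → ℝ,
      (∀ t ≥ t₀, ∀ k : Fin K,
        HasDerivWithinAt (fun s => ϖ s k) (t⁻¹ * Phi K (ϖ t) k) (Set.Ici t₀) t) →
      Real.sqrt (∑ k, ϖ t₀ k ^ 2) ≤ M →
      ∀ t ≥ t₀,
        Real.sqrt (∑ k, (ϖ t k - (∑ j, ϖ t₀ j * (1 / Real.sqrt K)) * (1 / Real.sqrt K)) ^ 2)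
          ≤ C * t₀ / t := by
  have hK0 : 0 < K := by omega
  have hKR : (0:ℝ) < K := by exact_mod_cast hK0
  intro M hM
  -- constants
  set c₀ : ℝ := (1 - Real.exp (-(2 * M))) / (2 * M) with hc₀def
  have hexplt : Real.exp (-(2 * M)) < 1 := by
    rw [Real.exp_lt_one_iff]; linarith
  have hc₀pos : 0 < c₀ := div_pos (by linarith) (by linarith)
  have hc₀le1 : c₀ ≤ 1 := by
    rw [hc₀def, div_le_one (by linarith)]
    nlinarith [Real.add_one_le_exp (-(2 * M))]
  set Tm : ℝ := max 1 (4 * M) with hTmdef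
  have hTm1 : (1:ℝ) ≤ Tm := le_max_left _ _
  have hTmpos : (0:ℝ) < Tm := lt_of_lt_of_le one_pos hTm1
  have hTm4M : 4 * M ≤ Tm := le_max_right _ _
  set T : ℝ := Tm ^ ((1:ℝ) / c₀) with hTdef
  have hT1 : (1:ℝ) ≤ T := Real.one_le_rpow hTm1 (by positivity)
  have hTpos : (0:ℝ) < T := lt_of_lt_of_le one_pos hT1
  have hTc : T ^ (c₀ : ℝ) = Tm := by
    rw [hTdef, ← Real.rpow_mul hTmpos.le, one_div, inv_mul_cancel₀ hc₀pos.ne', Real.rpow_one]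
  have hM₁ : M / Tm ≤ 1 / 4 := by
    rw [div_le_div_iff₀ hTmpos (by norm_num)]
    linarith
  have hM₁M : M / Tm ≤ M := by
    rw [div_le_iff₀ hTmpos]; nlinarith
  have hM₁pos : 0 < M / Tm := div_pos hM hTmpos
  refine ⟨M * T * Real.exp (1 / (2 * c₀)), by positivity, ?_⟩
  intro t₀ ht₀ ϖ hode hM0
  set m : ℝ := (∑ j, ϖ t₀ j) / K with hmdef
  have hcoef : (∑ j, ϖ t₀ j * (1 / Real.sqrt K)) * (1 / Real.sqrt K) = m := by
    rw [← Finset.sum_mul, mul_assoc]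
    have h1 : (1 / Real.sqrt K) * (1 / Real.sqrt K) = 1 / K := by
      rw [div_mul_div_comm, one_mul, Real.mul_self_sqrt (Nat.cast_nonneg K)]
    rw [h1, mul_one_div]
  simp only [hcoef]
  set E : ℝ → ℝ := fun s => ∑ k, (ϖ s k - m) ^ 2 with hEdef
  set R : ℝ → ℝ := fun s => ∑ k, (ϖ s k - m) * Phi K (ϖ s) k with hRdef
  have hEnonneg : ∀ t, 0 ≤ E t := fun t => Finset.sum_nonneg fun k _ => sq_nonneg _
  have hsum₀ : ∑ k, ϖ t₀ k = (K:ℝ) * m := by rw [hmdef]; field_simp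
  -- conservation of the mean
  have hcons : ∀ t ≥ t₀, ∑ k, ϖ t k = (K:ℝ) * m := by
    intro t ht
    have hval : (fun u => ∑ k, ϖ u k) t = (fun u => ∑ k, ϖ u k) t₀ := by
      have hderiv : ∀ s ∈ Ico t₀ t, HasDerivWithinAt (fun u => ∑ k, ϖ u k) 0 (Ici s) s := by
        intro s hs
        have h1 : HasDerivWithinAt (fun u => ∑ k, ϖ u k)
            (∑ k, s⁻¹ * Phi K (ϖ s) k) (Ici t₀) s :=
          HasDerivWithinAt.fun_sum fun k _ => hode s hs.1 k
        have h2 : (∑ k, s⁻¹ * Phi K (ϖ s) k) = 0 := by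
          rw [← Finset.mul_sum, sum_Phi, mul_zero]
        rw [h2] at h1
        exact h1.mono (Ici_subset_Ici.2 hs.1)
      have hcont : ContinuousOn (fun u => ∑ k, ϖ u k) (Icc t₀ t) := by
        intro s hs
        exact ((HasDerivWithinAt.fun_sum fun k _ =>
          hode s hs.1 k).continuousWithinAt).mono Icc_subset_Ici_self
      exact constant_of_has_deriv_right_zero hcont hderiv t (right_mem_Icc.2 ht)
    simpa [hsum₀] using hval
  -- E bound at t₀
  have hEt₀ : E t₀ ≤ M ^ 2 := by
    have hid : E t₀ = (∑ k, ϖ t₀ k ^ 2) - (K:ℝ) * m ^ 2 := by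
      show (∑ k, (ϖ t₀ k - m) ^ 2) = (∑ k, ϖ t₀ k ^ 2) - (K:ℝ) * m ^ 2
      have h1 : ∀ k ∈ Finset.univ, (ϖ t₀ k - m) ^ 2
          = ϖ t₀ k ^ 2 - (2 * m) * ϖ t₀ k + m ^ 2 := fun k _ => by ring
      rw [Finset.sum_congr rfl h1, Finset.sum_add_distrib, Finset.sum_sub_distrib,
        ← Finset.mul_sum, Finset.sum_const, Finset.card_univ, Fintype.card_fin,
        nsmul_eq_mul, hsum₀]
      ring
    have h2 : (∑ k, ϖ t₀ k ^ 2) ≤ M ^ 2 := by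
      have h3 := pow_le_pow_left₀ (Real.sqrt_nonneg _) hM0 2
      rwa [Real.sq_sqrt (Finset.sum_nonneg fun k _ => sq_nonneg _)] at h3
    nlinarith [mul_nonneg hKR.le (sq_nonneg m)]
  -- derivative of E
  have hE' : ∀ t ≥ t₀, HasDerivWithinAt E (2 * t⁻¹ * R t) (Ici t₀) t := by
    intro t ht
    have h1 : HasDerivWithinAt (fun s => ∑ k, (ϖ s k - m) ^ 2)
        (∑ k, (2:ℝ) * (ϖ t k - m) ^ 1 * (t⁻¹ * Phi K (ϖ t) k)) (Ici t₀) t :=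
      HasDerivWithinAt.fun_sum fun k _ => ((hode t ht k).sub_const m).pow 2
    have h2 : (∑ k, (2:ℝ) * (ϖ t k - m) ^ 1 * (t⁻¹ * Phi K (ϖ t) k)) = 2 * t⁻¹ * R t := by
      rw [hRdef, Finset.mul_sum]
      exact Finset.sum_congr rfl fun k _ => by ring
    rw [h2] at h1
    exact h1
  have hEcont : ContinuousOn E (Ici t₀) := fun s hs => (hE' s hs).continuousWithinAt
  have hEderivAt : ∀ t, t₀ < t → HasDerivAt E (2 * t⁻¹ * R t) t :=
    fun t ht => (hE' t ht.le).hasDerivAt (Ici_mem_nhds ht)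
  -- dissipation inequality
  have hdiss : ∀ t ≥ t₀, ∀ c : ℝ, 0 ≤ c →
      (∀ j ∈ range K, (Real.exp (-(dd K (ϖ t) j)) - 1) * dd K (ϖ t) j
        ≤ -c * (dd K (ϖ t) j) ^ 2) →
      R t ≤ -c * E t := by
    intro t ht c hc hpt
    have h1 : R t = ∑ i : Fin K, ϖ t i * Phi K (ϖ t) i - m * ∑ i : Fin K, Phi K (ϖ t) i := by
      rw [hRdef, Finset.mul_sum, ← Finset.sum_sub_distrib]
      exact Finset.sum_congr rfl fun k _ => by ring
    rw [sum_Phi, mul_zero, sub_zero, sum_x_Phi] at h1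
    have h2 : ∀ j ∈ range K, dd K (ϖ t) j * gg K (ϖ t) j
        ≤ γcoef K j * (-c * (dd K (ϖ t) j) ^ 2) := by
      intro j hj
      have hγ : 0 ≤ γcoef K j := γnonneg K j (Nat.le_of_lt (Finset.mem_range.1 hj))
      calc dd K (ϖ t) j * gg K (ϖ t) j
          = γcoef K j * ((Real.exp (-(dd K (ϖ t) j)) - 1) * dd K (ϖ t) j) := by
            rw [gg]; ring
        _ ≤ γcoef K j * (-c * (dd K (ϖ t) j) ^ 2) :=
            mul_le_mul_of_nonneg_left (hpt j hj) hγ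
    have h3 : R t ≤ ∑ j ∈ range K, γcoef K j * (-c * (dd K (ϖ t) j) ^ 2) :=
      h1 ▸ Finset.sum_le_sum h2
    have h4 : ∑ j ∈ range K, γcoef K j * (-c * (dd K (ϖ t) j) ^ 2)
        = -c * ∑ j ∈ range K, γcoef K j * (dd K (ϖ t) j) ^ 2 := by
      rw [Finset.mul_sum]
      exact Finset.sum_congr rfl fun j _ => by ring
    have hS' : ∑ n ∈ range K, xe K (ϖ t) n = (K:ℝ) * m := by
      rw [← Fin.sum_univ_eq_sum_range (fun n => xe K (ϖ t) n) K]
      rw [Finset.sum_congr rfl fun (i : Fin K) _ => xe_coe K (ϖ t) i]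
      exact hcons t ht
    have hEeq : E t = ∑ i ∈ range K, (xe K (ϖ t) i - (∑ n ∈ range K, xe K (ϖ t) n) / K) ^ 2 := by
      rw [hS']
      have hm' : (K:ℝ) * m / K = m := by field_simp
      rw [hm', hEdef]
      rw [← Fin.sum_univ_eq_sum_range (fun n => (xe K (ϖ t) n - m) ^ 2) K]
      exact Finset.sum_congr rfl fun i _ => by rw [xe_coe]
    have h5 : E t ≤ ∑ j ∈ range K, γcoef K j * (dd K (ϖ t) j) ^ 2 := by
      rw [hEeq]
      exact poincare hK0 (xe K (ϖ t)) (dd K (ϖ t)) (fun j => rfl)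
    calc R t ≤ -c * ∑ j ∈ range K, γcoef K j * (dd K (ϖ t) j) ^ 2 := h4 ▸ h3
      _ ≤ -c * E t := mul_le_mul_of_nonpos_left h5 (neg_nonpos.2 hc)
  -- difference bounds
  have hddle : ∀ t ≥ t₀, ∀ b : ℝ, 0 ≤ b → E t ≤ b ^ 2 →
      ∀ j ∈ range K, |dd K (ϖ t) j| ≤ 2 * b := by
    intro t ht b hb hEb j hj
    have habs : ∀ a : Fin K, |ϖ t a - m| ≤ b := by
      intro a
      have h1 : (ϖ t a - m) ^ 2 ≤ E t :=
        Finset.single_le_sum (f := fun k => (ϖ t k - m) ^ 2)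
          (fun k _ => sq_nonneg _) (Finset.mem_univ a)
      calc |ϖ t a - m| = Real.sqrt ((ϖ t a - m) ^ 2) := (Real.sqrt_sq_eq_abs _).symm
        _ ≤ Real.sqrt (b ^ 2) := Real.sqrt_le_sqrt (h1.trans hEb)
        _ = b := Real.sqrt_sq hb
    rcases Nat.eq_zero_or_pos j with rfl | hjpos
    · rw [dd_zero]; simp; positivity
    · have hj' : j < K := Finset.mem_range.1 hj
      have hj'' : j - 1 < K := by omega
      have hdd : dd K (ϖ t) j = ϖ t ⟨j, hj'⟩ - ϖ t ⟨j - 1, hj''⟩ := by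
        rw [dd, xe_lt K (ϖ t) hj', xe_lt K (ϖ t) hj'']
      rw [hdd]
      calc |ϖ t ⟨j, hj'⟩ - ϖ t ⟨j - 1, hj''⟩|
          ≤ |ϖ t ⟨j, hj'⟩ - m| + |m - ϖ t ⟨j - 1, hj''⟩| := abs_sub_le _ _ _
        _ = |ϖ t ⟨j, hj'⟩ - m| + |ϖ t ⟨j - 1, hj''⟩ - m| := by rw [abs_sub_comm m]
        _ ≤ b + b := add_le_add (habs _) (habs _)
        _ = 2 * b := by ring
  -- pointwise inequality for stage 1
  have hpt1 : ∀ t ≥ t₀, E t ≤ M ^ 2 →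
      ∀ j ∈ range K, (Real.exp (-(dd K (ϖ t) j)) - 1) * dd K (ϖ t) j
        ≤ -c₀ * (dd K (ϖ t) j) ^ 2 := by
    intro t ht hEb j hj
    have h1 := hddle t ht M hM.le hEb j hj
    exact expineq1 (2 * M) (by linarith) (dd K (ϖ t) j) h1
  -- Stage 0 : E is antitone
  have hE0 : AntitoneOn E (Ici t₀) := by
    apply antitoneOn_of_deriv_nonpos (convex_Ici t₀) hEcont
    · intro t ht
      rw [interior_Ici] at ht
      exact (hEderivAt t ht).differentiableAt.differentiableWithinAt
    · intro t ht
      rw [interior_Ici] at ht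
      rw [(hEderivAt t ht).deriv]
      have htpos : 0 < t := lt_trans ht₀ ht
      have hR0 : R t ≤ 0 := by
        have h := hdiss t (le_of_lt ht) 0 le_rfl (fun j hj => by
          simpa using expineq0 (dd K (ϖ t) j))
        simpa using h
      have h2 : (0:ℝ) ≤ 2 * t⁻¹ := by positivity
      exact mul_nonpos_of_nonneg_of_nonpos h2 hR0
  have hEM : ∀ t ≥ t₀, E t ≤ M ^ 2 := fun t ht =>
    le_trans (hE0 self_mem_Ici ht ht) hEt₀
  -- Stage 1 : polynomial decay with exponent 2 c₀
  have hstage1 : ∀ t ≥ t₀, E t * t ^ (2 * c₀ : ℝ) ≤ M ^ 2 * t₀ ^ (2 * c₀ : ℝ) := by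
    have hF : AntitoneOn (fun s => E s * s ^ (2 * c₀ : ℝ)) (Ici t₀) := by
      apply antitoneOn_of_deriv_nonpos (convex_Ici t₀)
      · exact hEcont.mul (fun s hs => (Real.continuousAt_rpow_const s _
          (Or.inl (ne_of_gt (lt_of_lt_of_le ht₀ hs)))).continuousWithinAt)
      · intro t ht
        rw [interior_Ici] at ht
        have htpos : 0 < t := lt_trans ht₀ ht
        exact ((hEderivAt t ht).mul (Real.hasDerivAt_rpow_const
          (Or.inl htpos.ne'))).differentiableAt.differentiableWithinAt
      · intro t ht
        rw [interior_Ici] at ht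
        have htpos : 0 < t := lt_trans ht₀ ht
        have hder := (hEderivAt t ht).fun_mul (Real.hasDerivAt_rpow_const (p := (2 * c₀ : ℝ))
          (Or.inl htpos.ne'))
        rw [hder.deriv]
        have hP : (0:ℝ) < t ^ (2 * c₀ : ℝ) := Real.rpow_pos_of_pos htpos _
        have hRc : R t ≤ -c₀ * E t := hdiss t ht.le c₀ hc₀pos.le (hpt1 t ht.le (hEM t ht.le))
        have h1 : 2 * t⁻¹ * R t * t ^ (2 * c₀ : ℝ)
            ≤ 2 * t⁻¹ * (-c₀ * E t) * t ^ (2 * c₀ : ℝ) := by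
          apply mul_le_mul_of_nonneg_right _ hP.le
          exact mul_le_mul_of_nonneg_left hRc (by positivity)
        have h2 : t ^ (2 * c₀ - 1 : ℝ) = t ^ (2 * c₀ : ℝ) / t := by
          rw [Real.rpow_sub htpos, Real.rpow_one]
        have h3 : 2 * t⁻¹ * (-c₀ * E t) * t ^ (2 * c₀ : ℝ)
            + E t * (2 * c₀ * t ^ (2 * c₀ - 1 : ℝ)) = 0 := by
          rw [h2]; field_simp; ring
        linarith
    intro t ht
    calc E t * t ^ (2 * c₀ : ℝ) ≤ E t₀ * t₀ ^ (2 * c₀ : ℝ) := hF self_mem_Ici ht ht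
      _ ≤ M ^ 2 * t₀ ^ (2 * c₀ : ℝ) :=
          mul_le_mul_of_nonneg_right hEt₀ (Real.rpow_pos_of_pos ht₀ _).le
  have hdec : ∀ t ≥ t₀, E t ≤ M ^ 2 * (t₀ / t) ^ (2 * c₀ : ℝ) := by
    intro t ht
    have htpos : 0 < t := lt_of_lt_of_le ht₀ ht
    have hP : (0:ℝ) < t ^ (2 * c₀ : ℝ) := Real.rpow_pos_of_pos htpos _
    rw [Real.div_rpow ht₀.le htpos.le, ← mul_div_assoc, le_div_iff₀ hP]
    exact hstage1 t ht
  -- Stage 2 : setup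
  set t₁ : ℝ := T * t₀ with ht₁def
  have ht₁pos : 0 < t₁ := by positivity
  have ht₀t₁ : t₀ ≤ t₁ := by nlinarith
  set B : ℝ → ℝ := fun s => (M / Tm) * (t₁ / s) ^ (c₀ : ℝ) with hBdef
  have hBpos : ∀ t, t₁ ≤ t → 0 ≤ B t := by
    intro t ht
    have htpos : 0 < t := lt_of_lt_of_le ht₁pos ht
    rw [hBdef]
    positivity
  have hBle : ∀ t, t₁ ≤ t → B t ≤ 1 / 4 := by
    intro t ht
    have htpos : 0 < t := lt_of_lt_of_le ht₁pos ht
    have h1 : (t₁ / t) ^ (c₀ : ℝ) ≤ 1 :=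
      Real.rpow_le_one (by positivity) (by rw [div_le_one htpos]; exact ht) hc₀pos.le
    calc B t ≤ (M / Tm) * 1 := mul_le_mul_of_nonneg_left h1 hM₁pos.le
      _ ≤ 1 / 4 := by rw [mul_one]; exact hM₁
  have hsq_rpow : ∀ u : ℝ, 0 ≤ u → (u ^ (c₀ : ℝ)) ^ 2 = u ^ (2 * c₀ : ℝ) := by
    intro u hu
    rw [← Real.rpow_natCast (u ^ (c₀ : ℝ)) 2, ← Real.rpow_mul hu]
    congr 1
    push_cast
    ring
  have hEB : ∀ t, t₁ ≤ t → E t ≤ (B t) ^ 2 := by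
    intro t ht
    have htpos : 0 < t := lt_of_lt_of_le ht₁pos ht
    have h1 := hdec t (le_trans ht₀t₁ ht)
    have h2 : (t₁ / t) ^ (c₀ : ℝ) = Tm * (t₀ / t) ^ (c₀ : ℝ) := by
      have h3 : t₁ / t = T * (t₀ / t) := by rw [ht₁def]; ring
      rw [h3, Real.mul_rpow hTpos.le (by positivity), hTc]
    have h4 : (B t) ^ 2 = M ^ 2 * (t₀ / t) ^ (2 * c₀ : ℝ) := by
      rw [hBdef]
      show ((M / Tm) * (t₁ / t) ^ (c₀ : ℝ)) ^ 2 = _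
      rw [h2, ← hsq_rpow (t₀ / t) (by positivity)]
      field_simp
    rw [h4]
    exact h1
  -- refined dissipation for t ≥ t₁
  have hR3 : ∀ t, t₁ ≤ t → R t ≤ -(1 - 2 * B t) * E t := by
    intro t ht
    have hc : 0 ≤ 1 - 2 * B t := by have := hBle t ht; linarith
    apply hdiss t (le_trans ht₀t₁ ht) _ hc
    intro j hj
    exact expineq2 (B t) (dd K (ϖ t) j) (hBpos t ht)
      (hddle t (le_trans ht₀t₁ ht) (B t) (hBpos t ht) (hEB t ht) j hj)
  set A : ℝ := 4 * (M / Tm) / c₀ * t₁ ^ (c₀ : ℝ) with hAdef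
  have hApos : 0 ≤ A := by positivity
  -- Stage 3 : sharp decay
  have hstage3 : ∀ t, t₁ ≤ t →
      E t * (t ^ 2 * Real.exp (A * t ^ (-c₀ : ℝ)))
        ≤ E t₁ * (t₁ ^ 2 * Real.exp (A * t₁ ^ (-c₀ : ℝ))) := by
    have hF : AntitoneOn (fun s => E s * (s ^ 2 * Real.exp (A * s ^ (-c₀ : ℝ)))) (Ici t₁) := by
      apply antitoneOn_of_deriv_nonpos (convex_Ici t₁)
      · apply (hEcont.mono (Ici_subset_Ici.2 ht₀t₁)).mul
        intro s hs
        have hs0 : s ≠ 0 := ne_of_gt (lt_of_lt_of_le ht₁pos hs)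
        exact (((continuous_pow 2).continuousAt).mul
          ((Real.continuous_exp.continuousAt).comp
            ((Real.continuousAt_rpow_const s _ (Or.inl hs0)).const_mul A))).continuousWithinAt
      · intro t ht
        rw [interior_Ici] at ht
        have htpos : 0 < t := lt_trans ht₁pos ht
        exact ((hEderivAt t (lt_of_le_of_lt ht₀t₁ ht)).mul ((hasDerivAt_pow 2 t).mul
          (((Real.hasDerivAt_rpow_const (Or.inl htpos.ne')).const_mul
            A).exp))).differentiableAt.differentiableWithinAt
      · intro t ht
        rw [interior_Ici] at ht
        have htpos : 0 < t := lt_trans ht₁pos ht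
        have hder := (hEderivAt t (lt_of_le_of_lt ht₀t₁ ht)).fun_mul ((hasDerivAt_pow 2 t).fun_mul
          (((Real.hasDerivAt_rpow_const (p := (-c₀ : ℝ)) (Or.inl htpos.ne')).const_mul A).exp))
        rw [hder.deriv]
        have hq1 : t ^ (-c₀ - 1 : ℝ) = t ^ (-c₀ : ℝ) / t := by
          rw [Real.rpow_sub htpos, Real.rpow_one]
        have hBt : B t = (M / Tm) * (t₁ ^ (c₀ : ℝ) * t ^ (-c₀ : ℝ)) := by
          rw [hBdef]
          show (M / Tm) * (t₁ / t) ^ (c₀ : ℝ) = _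
          rw [Real.div_rpow ht₁pos.le htpos.le, Real.rpow_neg htpos.le]
          ring
        have hepos : (0:ℝ) < Real.exp (A * t ^ (-c₀ : ℝ)) := Real.exp_pos _
        have hDle : R t ≤ -(1 - 2 * B t) * E t := hR3 t ht.le
        rw [hBt] at hDle
        have hfact : (0:ℝ) < t ^ 2 * Real.exp (A * t ^ (-c₀ : ℝ)) := by positivity
        have h1 : 2 * t⁻¹ * R t * (t ^ 2 * Real.exp (A * t ^ (-c₀ : ℝ)))
            ≤ 2 * t⁻¹ * (-(1 - 2 * ((M / Tm) * (t₁ ^ (c₀ : ℝ) * t ^ (-c₀ : ℝ)))) * E t)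
              * (t ^ 2 * Real.exp (A * t ^ (-c₀ : ℝ))) :=
          mul_le_mul_of_nonneg_right
            (mul_le_mul_of_nonneg_left hDle (by positivity)) hfact.le
        have h2 : 2 * t⁻¹ * (-(1 - 2 * ((M / Tm) * (t₁ ^ (c₀ : ℝ) * t ^ (-c₀ : ℝ)))) * E t)
              * (t ^ 2 * Real.exp (A * t ^ (-c₀ : ℝ)))
            + E t * ((2:ℕ) * t ^ (2 - 1) * Real.exp (A * t ^ (-c₀ : ℝ))
              + t ^ 2 * (Real.exp (A * t ^ (-c₀ : ℝ)) * (A * (-c₀ * t ^ (-c₀ - 1 : ℝ))))) = 0 := by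
          rw [hq1, hAdef]
          field_simp
          ring
        linarith
    exact fun t ht => hF self_mem_Ici ht ht
  have hexp1 : A * t₁ ^ (-c₀ : ℝ) = 4 * (M / Tm) / c₀ := by
    rw [hAdef, mul_assoc, ← Real.rpow_add ht₁pos, add_neg_cancel, Real.rpow_zero, mul_one]
  have hfin3 : ∀ t, t₁ ≤ t → E t * t ^ 2 ≤ (M / Tm) ^ 2 * t₁ ^ 2 * Real.exp (1 / c₀) := by
    intro t ht
    have htpos : 0 < t := lt_of_lt_of_le ht₁pos ht
    have h1 : E t * t ^ 2 ≤ E t * (t ^ 2 * Real.exp (A * t ^ (-c₀ : ℝ))) := by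
      have hx : (1:ℝ) ≤ Real.exp (A * t ^ (-c₀ : ℝ)) :=
        Real.one_le_exp (by positivity)
      calc E t * t ^ 2 = E t * t ^ 2 * 1 := by ring
        _ ≤ E t * t ^ 2 * Real.exp (A * t ^ (-c₀ : ℝ)) :=
            mul_le_mul_of_nonneg_left hx (by positivity)
        _ = E t * (t ^ 2 * Real.exp (A * t ^ (-c₀ : ℝ))) := by ring
    have h2 := hstage3 t ht
    have h3 : E t₁ ≤ (M / Tm) ^ 2 := by
      have h5 := hEB t₁ le_rfl
      have hBt₁ : B t₁ = M / Tm := by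
        rw [hBdef]
        show (M / Tm) * (t₁ / t₁) ^ (c₀ : ℝ) = M / Tm
        rw [div_self ht₁pos.ne', Real.one_rpow, mul_one]
      rw [hBt₁] at h5
      exact h5
    have h4 : Real.exp (A * t₁ ^ (-c₀ : ℝ)) ≤ Real.exp (1 / c₀) := by
      apply Real.exp_le_exp.2
      rw [hexp1]
      have h6 : 4 * (M / Tm) ≤ 1 := by linarith
      exact (div_le_div_iff_of_pos_right hc₀pos).2 h6
    calc E t * t ^ 2 ≤ E t₁ * (t₁ ^ 2 * Real.exp (A * t₁ ^ (-c₀ : ℝ))) := h1.trans h2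
      _ ≤ (M / Tm) ^ 2 * (t₁ ^ 2 * Real.exp (1 / c₀)) :=
          mul_le_mul h3 (mul_le_mul_of_nonneg_left h4 (by positivity))
            (by positivity) (by positivity)
      _ = (M / Tm) ^ 2 * t₁ ^ 2 * Real.exp (1 / c₀) := by ring
  -- conclusion
  intro t ht
  have htpos : 0 < t := lt_of_lt_of_le ht₀ ht
  show Real.sqrt (E t) ≤ M * T * Real.exp (1 / (2 * c₀)) * t₀ / t
  by_cases hcase : t ≤ t₁
  · have h1 : Real.sqrt (E t) ≤ M := by
      calc Real.sqrt (E t) ≤ Real.sqrt (M ^ 2) := Real.sqrt_le_sqrt (hEM t ht)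
        _ = M := Real.sqrt_sq hM.le
    refine h1.trans ?_
    rw [le_div_iff₀ htpos]
    have hexp : (1:ℝ) ≤ Real.exp (1 / (2 * c₀)) := Real.one_le_exp (by positivity)
    have h2 : t ≤ T * t₀ := by rw [← ht₁def]; exact hcase
    have h3 : M * t ≤ M * (T * t₀) := mul_le_mul_of_nonneg_left h2 hM.le
    have h4 : M * (T * t₀) * 1 ≤ M * (T * t₀) * Real.exp (1 / (2 * c₀)) :=
      mul_le_mul_of_nonneg_left hexp (by positivity)
    linarith
  · push_neg at hcase
    have ht1 : t₁ ≤ t := hcase.le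
    have h0 : (0:ℝ) ≤ M * T * Real.exp (1 / (2 * c₀)) * t₀ / t := by positivity
    have hexpsq : (Real.exp (1 / (2 * c₀))) ^ 2 = Real.exp (1 / c₀) := by
      rw [← Real.exp_nat_mul]
      congr 1
      field_simp
      norm_num
    have hsq : E t ≤ (M * T * Real.exp (1 / (2 * c₀)) * t₀ / t) ^ 2 := by
      rw [div_pow, le_div_iff₀ (by positivity : (0:ℝ) < t ^ 2)]
      calc E t * t ^ 2 ≤ (M / Tm) ^ 2 * t₁ ^ 2 * Real.exp (1 / c₀) := hfin3 t ht1
        _ ≤ M ^ 2 * t₁ ^ 2 * Real.exp (1 / c₀) := by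
            apply mul_le_mul_of_nonneg_right _ (Real.exp_pos _).le
            exact mul_le_mul_of_nonneg_right
              (pow_le_pow_left₀ hM₁pos.le hM₁M 2) (by positivity)
        _ = (M * T * Real.exp (1 / (2 * c₀)) * t₀) ^ 2 := by
            rw [ht₁def, ← hexpsq]; ring
    calc Real.sqrt (E t) ≤ Real.sqrt ((M * T * Real.exp (1 / (2 * c₀)) * t₀ / t) ^ 2) :=
        Real.sqrt_le_sqrt hsq
      _ = M * T * Real.exp (1 / (2 * c₀)) * t₀ / t := Real.sqrt_sq h0
end

section
/- Let K ≥ 2, let Φ : ℝ^K → ℝ^K be defined by Φ_k(x) = γ_{k−1}·(e^(−(x_k−x_{k−1})) − 1) − γ_k·(e^(−(x_{k+1}−x_k)) − 1) with γ_k = k·(K−k)/2 and γ₀ = γ_K = 0, and let e₁ = (1/√K)·(1, …, 1) ∈ ℝ^K. Fix θ with 1 < θ < 3/2, T > 0, and constants M > 0, C_θ > 0. Suppose ξ : [T, ∞) → ℝ^K is continuously differentiable and satisfies: (a) ‖ξ(t)‖ ≤ M for all t ≥ T; (b) ξ'(t) = t^(−1)·Φ(ξ(t)) + r(t) where ‖r(t)‖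 ≤ C_θ·t^(−θ) for all t ≥ T; (c) |(ξ(t), e₁)| ≤ C_θ·t^(−θ+1) for all t ≥ T. Then there exists C' > 0 such that ‖ξ(t)‖ ≤ C'·t^(−θ+1) for all t ≥ T, where (·,·) and ‖·‖ denote the Euclidean inner product and norm on ℝ^K. -/
open Finset

noncomputable def Xe (K : ℕ) (x : Fin K → ℝ) : ℕ → ℝ :=
  fun n => if h : n < K then x ⟨n, h⟩ else 0

lemma γcoef_zero (K : ℕ) : γcoef K 0 = 0 := by simp [γcoef]
lemma γcoef_self (K : ℕ) : γcoef K K = 0 := by simp [γcoef]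
lemma γcoef_nonneg (K k : ℕ) (h : k ≤ K) : 0 ≤ γcoef K k := by
  have h1 : (k:ℝ) ≤ K := by exact_mod_cast h
  have h2 : 0 ≤ (k:ℝ) * ((K:ℝ) - k) := mul_nonneg (by positivity) (by linarith)
  unfold γcoef; linarith

/-- Summation by parts identity for `⟨x, Φ x⟩`. -/
lemma sum_mul_phi (K : ℕ) (x : Fin K → ℝ) :
    ∑ i, x i * Phi K x i
      = ∑ j ∈ range K, γcoef K j *
          ((Xe K x j - Xe K x (j-1)) * (Real.exp (-(Xe K x j - Xe K x (j-1))) - 1)) := by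
  set X := Xe K x with hX
  set G : ℕ → ℝ := fun n => γcoef K n * (Real.exp (-(X n - X (n-1))) - 1) with hG
  have hG0 : G 0 = 0 := by simp [hG, γcoef_zero]
  have hGK : G K = 0 := by simp [hG, γcoef_self]
  have h1 : ∑ i, x i * Phi K x i = ∑ n ∈ range K, X n * (G n - G (n+1)) := by
    rw [← Fin.sum_univ_eq_sum_range (fun n => X n * (G n - G (n+1))) K]
    refine Finset.sum_congr rfl fun i _ => ?_
    simp [Phi, hG, hX, Xe, Nat.add_sub_cancel, i.isLt]
  have h2 : ∑ n ∈ range K, X n * G (n+1) = ∑ n ∈ range K, X (n-1) * G n := by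
    have e0 := Finset.sum_range_succ' (fun m => X (m-1) * G m) K
    have hend := Finset.sum_range_succ (fun m => X (m-1) * G m) K
    have e1 : ∑ m ∈ range (K+1), X (m-1) * G m
        = ∑ n ∈ range K, X n * G (n+1) + X (0-1) * G 0 := by
      rw [e0]; simp
    have e2 : ∑ m ∈ range (K+1), X (m-1) * G m
        = ∑ m ∈ range K, X (m-1) * G m + X (K-1) * G K := hend
    rw [hG0] at e1; rw [hGK] at e2
    simp at e1 e2; linarith
  rw [h1]
  simp only [mul_sub]
  rw [Finset.sum_sub_distrib, h2, ← Finset.sum_sub_distrib]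
  refine Finset.sum_congr rfl fun n _ => ?_
  simp only [hG]; ring

/-- Pointwise inequality `d (e^{-d} - 1) ≤ -((1-e^{-B})/B) d²` for `|d| ≤ B`. -/
lemma pointwise_exp (B d : ℝ) (hB : 0 < B) (hd : |d| ≤ B) :
    d * (Real.exp (-d) - 1) ≤ -((1 - Real.exp (-B))/B) * d^2 := by
  set c := (1 - Real.exp (-B))/B with hc
  have hc1 : c ≤ 1 := by
    rw [hc, div_le_one hB]
    have := Real.add_one_le_exp (-B); linarith
  have hc0 : 0 ≤ c := by
    apply div_nonneg _ hB.le
    have : Real.exp (-B) ≤ 1 := Real.exp_le_one_iff.mpr (by linarith)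
    linarith
  rcases le_or_gt d 0 with h | h
  · have h1 : -d ≤ Real.exp (-d) - 1 := by have := Real.add_one_le_exp (-d); linarith
    have h2 : d * (Real.exp (-d) - 1) ≤ d * (-d) := mul_le_mul_of_nonpos_left h1 h
    have h3 : -(d^2) ≤ -c * d^2 := by nlinarith [sq_nonneg d]
    nlinarith
  · have hdB : d ≤ B := (abs_le.mp hd).2
    have hw1 : (0:ℝ) ≤ 1 - d/B := by
      have : d/B ≤ 1 := (div_le_one hB).mpr hdB
      linarith
    have hw2 : (0:ℝ) ≤ d/B := by positivity
    have hconv := convexOn_exp.2 (Set.mem_univ (0:ℝ)) (Set.mem_univ (-B)) hw1 hw2 (by ring)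
    have harg : (1 - d/B) • (0:ℝ) + (d/B) • (-B) = -d := by
      simp only [smul_eq_mul]
      field_simp
      ring
    rw [harg] at hconv
    have hexp : Real.exp (-d) ≤ 1 - c * d := by
      have hB' : B ≠ 0 := ne_of_gt hB
      calc Real.exp (-d) ≤ (1 - d/B) * Real.exp 0 + (d/B) * Real.exp (-B) := hconv
        _ = 1 - c * d := by rw [Real.exp_zero, hc]; field_simp; ring
    calc d * (Real.exp (-d) - 1) ≤ d * ((1 - c*d) - 1) :=
          mul_le_mul_of_nonneg_left (by linarith) h.le
      _ = -c * d^2 := by ring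

lemma exp_le_c2 (B : ℝ) (hB : 0 < B) : Real.exp (-B) ≤ (1 - Real.exp (-B))/B := by
  rw [le_div_iff₀ hB]
  have h1 := Real.add_one_le_exp B
  have h3 : 0 < Real.exp B := Real.exp_pos B
  rw [Real.exp_neg, inv_mul_eq_div, div_le_iff₀ h3, sub_mul,
    inv_mul_cancel₀ (ne_of_gt h3)]
  nlinarith

lemma gauss_sum (n : ℕ) : ∑ i ∈ range n, (i:ℝ) = n * (n-1) / 2 := by
  induction n with
  | zero => simp
  | succ m ih => rw [Finset.sum_range_succ, ih]; push_cast; ring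

lemma count_W (K l : ℕ) (hl : l ∈ range K) :
    ∑ j ∈ range K, ∑ i ∈ range j, (if l ∈ Ico i j then ((j:ℝ) - i) else 0)
      = (K:ℝ) * γcoef K (l+1) := by
  have hlK : l < K := mem_range.mp hl
  have hinner : ∀ j ∈ range K,
      (∑ i ∈ range j, (if l ∈ Ico i j then ((j:ℝ) - i) else 0))
        = if l < j then ((l:ℝ)+1) * (j:ℝ) - l*(l+1)/2 else 0 := by
    intro j _
    by_cases hlj : l < j
    · rw [if_pos hlj]
      have h1 : ∀ i ∈ range j, (if l ∈ Ico i j then ((j:ℝ) - i) else 0)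
          = (if i ∈ range (l+1) then ((j:ℝ) - i) else 0) := by
        intro i _
        congr 1
        simp only [mem_Ico, mem_range, eq_iff_iff]
        constructor
        · rintro ⟨h, _⟩; omega
        · intro h; exact ⟨by omega, hlj⟩
      rw [Finset.sum_congr rfl h1, Finset.sum_ite_mem]
      have : range j ∩ range (l+1) = range (l+1) := by
        apply Finset.inter_eq_right.mpr
        intro x hx
        simp only [mem_range] at hx ⊢
        omega
      rw [this, Finset.sum_sub_distrib, Finset.sum_const, Finset.card_range, gauss_sum]
      push_cast; ring
    · rw [if_neg hlj]
      apply Finset.sum_eq_zero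
      intro i hi
      rw [if_neg]
      simp only [mem_Ico]
      rintro ⟨_, h2⟩; exact hlj h2
  rw [Finset.sum_congr rfl hinner]
  have h2 : ∀ j ∈ range K, (if l < j then ((l:ℝ)+1) * (j:ℝ) - l*(l+1)/2 else 0)
      = (if j ∈ Ico (l+1) K then ((l:ℝ)+1) * (j:ℝ) - l*(l+1)/2 else 0) := by
    intro j hj
    congr 1
    simp only [mem_Ico, eq_iff_iff]
    exact ⟨fun h => ⟨h, mem_range.mp hj⟩, fun h => h.1⟩
  rw [Finset.sum_congr rfl h2, Finset.sum_ite_mem]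
  have : range K ∩ Ico (l+1) K = Ico (l+1) K := by
    apply Finset.inter_eq_right.mpr
    intro x hx; exact mem_range.mpr (mem_Ico.mp hx).2
  rw [this, Finset.sum_sub_distrib, Finset.sum_const, Nat.card_Ico, ← Finset.mul_sum]
  rw [Finset.sum_Ico_eq_sub _ (by omega : l+1 ≤ K), gauss_sum, gauss_sum]
  rw [nsmul_eq_mul, Nat.cast_sub (by omega : l+1 ≤ K)]
  unfold γcoef
  push_cast
  ring

lemma var_ident (y : ℕ → ℝ) (K : ℕ) :
    (K:ℝ) * ∑ n ∈ range K, (y n)^2 - (∑ n ∈ range K, y n)^2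
      = ∑ j ∈ range K, ∑ i ∈ range j, (y j - y i)^2 := by
  induction K with
  | zero => simp
  | succ n ih =>
    rw [Finset.sum_range_succ (fun j => ∑ i ∈ range j, (y j - y i)^2),
      Finset.sum_range_succ (fun n => (y n)^2), Finset.sum_range_succ y]
    have expand : ∑ i ∈ range n, (y n - y i)^2
        = (n:ℝ) * (y n)^2 - 2 * y n * (∑ i ∈ range n, y i) + ∑ i ∈ range n, (y i)^2 := by
      have : ∀ i ∈ range n, (y n - y i)^2 = (y n)^2 - 2 * y n * y i + (y i)^2 := by
        intro i _; ring
      rw [Finset.sum_congr rfl this, Finset.sum_add_distrib, Finset.sum_sub_distrib]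
      rw [Finset.sum_const, Finset.card_range, ← Finset.mul_sum]
      push_cast
      ring
    rw [expand, ← ih]
    push_cast; ring

lemma telescope_cs (y : ℕ → ℝ) (i j : ℕ) (hij : i ≤ j) :
    (y j - y i)^2 ≤ ((j:ℝ) - i) * ∑ l ∈ Ico i j, (y (l+1) - y l)^2 := by
  have htel : ∑ l ∈ Ico i j, (y (l+1) - y l) = y j - y i := by
    rw [Finset.sum_Ico_eq_sub _ hij, Finset.sum_range_sub y, Finset.sum_range_sub y]
    ring
  have hcs := Finset.sum_mul_sq_le_sq_mul_sq (Ico i j) (fun _ => (1:ℝ))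
      (fun l => y (l+1) - y l)
  simp only [one_mul, one_pow] at hcs
  rw [htel] at hcs
  have hcard : ∑ _l ∈ Ico i j, (1:ℝ) = (j:ℝ) - i := by
    rw [Finset.sum_const, Nat.card_Ico]
    simp [Nat.cast_sub hij]
  rw [hcard] at hcs
  exact hcs

/-- The spectral gap inequality for the weighted path Laplacian. -/
lemma gap_ineq (K : ℕ) (hK : 1 ≤ K) (y : ℕ → ℝ) :
    (K:ℝ) * ∑ n ∈ range K, (y n)^2 - (∑ n ∈ range K, y n)^2
      ≤ (K:ℝ) * ∑ j ∈ range K, γcoef K j * (y j - y (j-1))^2 := by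
  set e : ℕ → ℝ := fun l => (y (l+1) - y l)^2 with he
  rw [var_ident]
  have step1 : ∑ j ∈ range K, ∑ i ∈ range j, (y j - y i)^2
      ≤ ∑ j ∈ range K, ∑ i ∈ range j,
          ∑ l ∈ range K, (if l ∈ Ico i j then ((j:ℝ) - i) else 0) * e l := by
    apply Finset.sum_le_sum; intro j hj
    apply Finset.sum_le_sum; intro i hi
    have hij : i ≤ j := le_of_lt (mem_range.mp hi)
    refine le_trans (telescope_cs y i j hij) (le_of_eq ?_)
    have hsub : range K ∩ Ico i j = Ico i j := by
      apply Finset.inter_eq_right.mpr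
      intro x hx
      simp only [mem_Ico] at hx
      simp only [mem_range]
      have := mem_range.mp hj
      omega
    calc ((j:ℝ) - i) * ∑ l ∈ Ico i j, e l
        = ∑ l ∈ Ico i j, ((j:ℝ) - i) * e l := by rw [Finset.mul_sum]
      _ = ∑ l ∈ range K, (if l ∈ Ico i j then ((j:ℝ) - i) * e l else 0) := by
          rw [Finset.sum_ite_mem, hsub]
      _ = ∑ l ∈ range K, (if l ∈ Ico i j then ((j:ℝ) - i) else 0) * e l := by
          refine Finset.sum_congr rfl fun l _ => ?_
          split_ifs <;> simp
  refine le_trans step1 (le_of_eq ?_)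
  have swap : ∑ j ∈ range K, ∑ i ∈ range j,
      ∑ l ∈ range K, (if l ∈ Ico i j then ((j:ℝ) - i) else 0) * e l
      = ∑ l ∈ range K, (∑ j ∈ range K, ∑ i ∈ range j,
          (if l ∈ Ico i j then ((j:ℝ) - i) else 0)) * e l := by
    calc ∑ j ∈ range K, ∑ i ∈ range j,
        ∑ l ∈ range K, (if l ∈ Ico i j then ((j:ℝ) - i) else 0) * e l
        = ∑ j ∈ range K, ∑ l ∈ range K, ∑ i ∈ range j,
            (if l ∈ Ico i j then ((j:ℝ) - i) else 0) * e l :=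
          Finset.sum_congr rfl fun j _ => Finset.sum_comm
      _ = ∑ l ∈ range K, ∑ j ∈ range K, ∑ i ∈ range j,
            (if l ∈ Ico i j then ((j:ℝ) - i) else 0) * e l := Finset.sum_comm
      _ = ∑ l ∈ range K, (∑ j ∈ range K, ∑ i ∈ range j,
            (if l ∈ Ico i j then ((j:ℝ) - i) else 0)) * e l := by
          refine Finset.sum_congr rfl fun l _ => ?_
          rw [Finset.sum_mul]
          refine Finset.sum_congr rfl fun j _ => ?_
          rw [Finset.sum_mul]
  rw [swap]
  have hW : ∀ l ∈ range K, (∑ j ∈ range K, ∑ i ∈ range j,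
      (if l ∈ Ico i j then ((j:ℝ) - i) else 0)) * e l
        = (K:ℝ) * (γcoef K (l+1) * e l) := by
    intro l hl
    rw [count_W K l hl]; ring
  rw [Finset.sum_congr rfl hW, ← Finset.mul_sum]
  congr 1
  obtain ⟨m, rfl⟩ : ∃ m, K = m + 1 := ⟨K - 1, by omega⟩
  rw [Finset.sum_range_succ (fun l => γcoef (m+1) (l+1) * e l),
      Finset.sum_range_succ' (fun j => γcoef (m+1) j * (y j - y (j-1))^2) m]
  simp only [γcoef, Nat.add_sub_cancel, Nat.cast_add, Nat.cast_one]
  norm_num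
  simp only [he]

lemma abs_Xe_le (K : ℕ) (x : Fin K → ℝ) (n : ℕ) :
    |Xe K x n| ≤ Real.sqrt (∑ k, x k ^ 2) := by
  unfold Xe
  split_ifs with h
  · rw [← Real.sqrt_sq_eq_abs]
    apply Real.sqrt_le_sqrt
    exact Finset.single_le_sum (f := fun k => x k ^ 2) (fun k _ => sq_nonneg _)
      (Finset.mem_univ (⟨n, h⟩ : Fin K))
  · simp [Real.sqrt_nonneg]

lemma sum_sq_eq (K : ℕ) (x : Fin K → ℝ) :
    ∑ k, x k ^ 2 = ∑ n ∈ range K, (Xe K x n)^2 := by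
  rw [← Fin.sum_univ_eq_sum_range (fun n => (Xe K x n)^2) K]
  refine Finset.sum_congr rfl fun i _ => ?_
  simp [Xe, i.isLt]

lemma sum_eq (K : ℕ) (x : Fin K → ℝ) :
    ∑ k, x k = ∑ n ∈ range K, Xe K x n := by
  rw [← Fin.sum_univ_eq_sum_range (fun n => Xe K x n) K]
  refine Finset.sum_congr rfl fun i _ => ?_
  simp [Xe, i.isLt]

/-- Master inequality: `⟨x, Φ x⟩ ≤ -c (‖x‖² - ⟨x, e₁⟩²)`. -/
lemma inner_Phi_le (K : ℕ) (hK : 1 ≤ K) (x : Fin K → ℝ) (B c : ℝ) (hB : 0 < B)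
    (hx : 2 * Real.sqrt (∑ k, x k ^ 2) ≤ B) (hc0 : 0 ≤ c)
    (hc : c ≤ (1 - Real.exp (-B))/B) :
    ∑ i, x i * Phi K x i
      ≤ -c * (∑ k, x k ^ 2 - (∑ k, x k * (1 / Real.sqrt K))^2) := by
  set c₂ := (1 - Real.exp (-B))/B with hc₂
  set X := Xe K x with hXdef
  have hKR : (0:ℝ) < K := by exact_mod_cast hK
  rw [sum_mul_phi K x]
  have step2 : ∑ j ∈ range K, γcoef K j *
      ((X j - X (j-1)) * (Real.exp (-(X j - X (j-1))) - 1))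
      ≤ ∑ j ∈ range K, γcoef K j * (-c₂ * (X j - X (j-1))^2) := by
    apply Finset.sum_le_sum
    intro j hj
    have hγ : 0 ≤ γcoef K j := γcoef_nonneg K j (le_of_lt (mem_range.mp hj))
    apply mul_le_mul_of_nonneg_left _ hγ
    apply pointwise_exp B _ hB
    have h1 := abs_Xe_le K x j
    have h2 := abs_Xe_le K x (j-1)
    calc |X j - X (j-1)| ≤ |X j| + |X (j-1)| := abs_sub _ _
      _ ≤ B := by rw [hXdef] at *; linarith
  refine le_trans step2 ?_
  have hgap := gap_ineq K hK X
  have hproj2 : (∑ k, x k * (1 / Real.sqrt K))^2 = (∑ n ∈ range K, X n)^2 / K := by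
    rw [← Finset.sum_mul, ← sum_eq]
    rw [mul_pow, div_pow, one_pow]
    rw [Real.sq_sqrt (le_of_lt hKR)]
    ring
  have hsum2 : ∑ k, x k ^ 2 = ∑ n ∈ range K, (X n)^2 := sum_sq_eq K x
  have key : ∑ k, x k ^ 2 - (∑ k, x k * (1 / Real.sqrt K))^2
      ≤ ∑ j ∈ range K, γcoef K j * (X j - X (j-1))^2 := by
    rw [hsum2, hproj2]
    rw [← mul_le_mul_iff_of_pos_right hKR, sub_mul, div_mul_cancel₀ _ (ne_of_gt hKR)]
    nlinarith [hgap]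
  have hc₂0 : (0:ℝ) ≤ c₂ := le_trans hc0 hc
  have e1 : ∑ j ∈ range K, γcoef K j * (-c₂ * (X j - X (j-1))^2)
      = -c₂ * ∑ j ∈ range K, γcoef K j * (X j - X (j-1))^2 := by
    rw [Finset.mul_sum]
    exact Finset.sum_congr rfl fun j _ => by ring
  rw [e1]
  have hbr : 0 ≤ ∑ k, x k ^ 2 - (∑ k, x k * (1 / Real.sqrt K))^2 := by
    have hcs := Finset.sum_mul_sq_le_sq_mul_sq Finset.univ x (fun _ => (1 / Real.sqrt K))
    simp only [Finset.sum_const, Finset.card_univ, Fintype.card_fin, nsmul_eq_mul] at hcs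
    have h1 : (K:ℝ) * (1/Real.sqrt K)^2 = 1 := by
      rw [div_pow, one_pow, Real.sq_sqrt (le_of_lt hKR)]
      field_simp
    rw [h1, mul_one] at hcs
    linarith
  have hgap' : 0 ≤ ∑ j ∈ range K, γcoef K j * (X j - X (j-1))^2 := le_trans hbr key
  nlinarith [mul_le_mul_of_nonneg_left key hc₂0, mul_le_mul_of_nonneg_right hc hgap']

/-- The derivative estimate for `‖ξ‖²`. -/
lemma Fprime_le (K : ℕ) (hK : 1 ≤ K) (x ρ : Fin K → ℝ) (t B c p R : ℝ)
    (ht : 0 < t) (hB : 0 < B) (hx2B : 2 * Real.sqrt (∑ k, x k ^ 2) ≤ B)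
    (hc0 : 0 ≤ c) (hc : c ≤ (1 - Real.exp (-B))/B)
    (hp : |∑ k, x k * (1 / Real.sqrt K)| ≤ p)
    (hR : Real.sqrt (∑ k, ρ k ^ 2) ≤ R) :
    ∑ k, 2 * x k * (t⁻¹ * Phi K x k + ρ k)
      ≤ -(2*c/t) * (∑ k, x k ^ 2) + (2*c/t) * p^2
          + 2 * Real.sqrt (∑ k, x k ^ 2) * R := by
  have hsplit : ∑ k, 2 * x k * (t⁻¹ * Phi K x k + ρ k)
      = 2 * t⁻¹ * (∑ k, x k * Phi K x k) + 2 * (∑ k, x k * ρ k) := by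
    rw [Finset.mul_sum, Finset.mul_sum, ← Finset.sum_add_distrib]
    refine Finset.sum_congr rfl fun k _ => by ring
  rw [hsplit]
  have h1 := inner_Phi_le K hK x B c hB hx2B hc0 hc
  have hproj2 : (∑ k, x k * (1 / Real.sqrt K))^2 ≤ p^2 := by
    rw [← sq_abs]
    have hp0 : 0 ≤ p := le_trans (abs_nonneg _) hp
    exact pow_le_pow_left₀ (abs_nonneg _) hp 2
  have h2 : ∑ k, x k * ρ k ≤ Real.sqrt (∑ k, x k ^ 2) * R := by
    have hcs := Finset.sum_mul_sq_le_sq_mul_sq Finset.univ x ρ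
    have habs : ∑ k, x k * ρ k ≤ |∑ k, x k * ρ k| := le_abs_self _
    have h3 : |∑ k, x k * ρ k| = Real.sqrt ((∑ k, x k * ρ k)^2) :=
      (Real.sqrt_sq_eq_abs _).symm
    have h4 : Real.sqrt ((∑ k, x k * ρ k)^2)
        ≤ Real.sqrt ((∑ k, x k ^ 2) * (∑ k, ρ k ^ 2)) := Real.sqrt_le_sqrt hcs
    have h5 : Real.sqrt ((∑ k, x k ^ 2) * (∑ k, ρ k ^ 2))
        = Real.sqrt (∑ k, x k ^ 2) * Real.sqrt (∑ k, ρ k ^ 2) :=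
      Real.sqrt_mul (Finset.sum_nonneg fun k _ => sq_nonneg _) _
    have h6 : Real.sqrt (∑ k, x k ^ 2) * Real.sqrt (∑ k, ρ k ^ 2)
        ≤ Real.sqrt (∑ k, x k ^ 2) * R :=
      mul_le_mul_of_nonneg_left hR (Real.sqrt_nonneg _)
    linarith [habs.trans (h3.le.trans (h4.trans (h5.le.trans h6)))]
  have ht2 : (0:ℝ) ≤ 2 * t⁻¹ := by positivity
  have h7 : 2 * t⁻¹ * (∑ k, x k * Phi K x k)
      ≤ 2 * t⁻¹ * (-c * (∑ k, x k ^ 2 - (∑ k, x k * (1 / Real.sqrt K))^2)) :=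
    mul_le_mul_of_nonneg_left h1 ht2
  have h8 : 2 * t⁻¹ * (-c * (∑ k, x k ^ 2 - (∑ k, x k * (1 / Real.sqrt K))^2))
      ≤ -(2*c/t) * (∑ k, x k ^ 2) + (2*c/t) * p^2 := by
    have hct : 0 ≤ 2*c/t := by positivity
    have : 2 * t⁻¹ * (-c * (∑ k, x k ^ 2 - (∑ k, x k * (1 / Real.sqrt K))^2))
        = -(2*c/t) * (∑ k, x k ^ 2) + (2*c/t) * (∑ k, x k * (1 / Real.sqrt K))^2 := by
      field_simp
      ring
    rw [this]
    have := mul_le_mul_of_nonneg_left hproj2 hct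
    linarith
  linarith [h7.trans h8, mul_le_mul_of_nonneg_left h2 (by norm_num : (0:ℝ) ≤ 2)]

lemma gronwall (f f' : ℝ → ℝ) (T₀ a E β : ℝ) (hT₀ : 0 < T₀)
    (hσ : a + 1 - β ≠ 0)
    (hf : ∀ t ≥ T₀, HasDerivWithinAt f (f' t) (Set.Ici T₀) t)
    (hineq : ∀ t ≥ T₀, f' t ≤ -(a/t) * f t + E * t ^ (-β)) :
    ∀ t ≥ T₀, t ^ a * f t
      ≤ T₀ ^ a * f T₀ - (E/(a+1-β)) * T₀ ^ (a+1-β) + (E/(a+1-β)) * t ^ (a+1-β) := by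
  set σ := a + 1 - β with hσdef
  set h : ℝ → ℝ := fun t => t ^ a * f t - (E/σ) * t ^ σ with hh
  set h' : ℝ → ℝ := fun t => a * t ^ (a-1) * f t + t ^ a * f' t - (E/σ) * (σ * t ^ (σ-1))
    with hh'
  have hD : ∀ t ≥ T₀, HasDerivWithinAt h (h' t) (Set.Ici T₀) t := by
    intro t ht
    have ht0 : (0:ℝ) < t := lt_of_lt_of_le hT₀ ht
    have h1 : HasDerivAt (fun s : ℝ => s ^ a) (a * t ^ (a-1)) t :=
      Real.hasDerivAt_rpow_const (Or.inl (ne_of_gt ht0))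
    have h2 : HasDerivAt (fun s : ℝ => s ^ σ) (σ * t ^ (σ-1)) t :=
      Real.hasDerivAt_rpow_const (Or.inl (ne_of_gt ht0))
    exact ((h1.hasDerivWithinAt.mul (hf t ht)).sub
      (h2.hasDerivWithinAt.const_mul (E/σ)))
  have hD' : ∀ t ∈ interior (Set.Ici T₀), HasDerivWithinAt h (h' t) (interior (Set.Ici T₀)) t := by
    intro t ht
    rw [interior_Ici] at ht
    exact ((hD t (le_of_lt ht)).hasDerivAt (Ici_mem_nhds ht)).hasDerivWithinAt
  have hnonpos : ∀ t ∈ interior (Set.Ici T₀), h' t ≤ 0 := by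
    intro t ht
    rw [interior_Ici] at ht
    have ht0 : (0:ℝ) < t := lt_trans hT₀ ht
    have ht0' : t ≠ 0 := ne_of_gt ht0
    have e1 : t ^ a * (a/t) = a * t ^ (a-1) := by
      rw [Real.rpow_sub_one ht0']; field_simp
    have e2 : t ^ a * t ^ (-β) = t ^ (σ - 1) := by
      rw [← Real.rpow_add ht0]; congr 1; rw [hσdef]; ring
    have e3 : (E/σ) * (σ * t ^ (σ-1)) = E * t ^ (σ-1) := by
      field_simp
    have hi := hineq t (le_of_lt ht)
    have hpos : (0:ℝ) < t ^ a := Real.rpow_pos_of_pos ht0 a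
    have h4 : t ^ a * f' t ≤ t ^ a * (-(a/t) * f t + E * t ^ (-β)) :=
      mul_le_mul_of_nonneg_left hi (le_of_lt hpos)
    have h5 : t ^ a * (-(a/t) * f t + E * t ^ (-β))
        = -(a * t ^ (a-1) * f t) + E * t ^ (σ-1) := by
      rw [mul_add, ← e2]; rw [← e1]; ring
    simp only [hh']
    rw [e3]
    linarith [h4.trans_eq h5]
  have hcont : ContinuousOn h (Set.Ici T₀) :=
    fun t ht => (hD t ht).continuousWithinAt
  have hanti : AntitoneOn h (Set.Ici T₀) :=
    antitoneOn_of_hasDerivWithinAt_nonpos (convex_Ici T₀) hcont hD' hnonpos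
  intro t ht
  have := hanti (Set.self_mem_Ici) ht ht
  simp only [hh] at this
  linarith

set_option maxHeartbeats 2000000 in
theorem perturbed_system_decay (K : ℕ) (hK : 2 ≤ K)
    (θ T M Cθ : ℝ) (hθ1 : 1 < θ) (hθ2 : θ < 3 / 2)
    (hT : 0 < T) (hM : 0 < M) (hCθ : 0 < Cθ)
    (ξ r : ℝ → Fin K → ℝ)
    (hderiv : ∀ t ≥ T, ∀ k : Fin K,
      HasDerivWithinAt (fun s => ξ s k) (t⁻¹ * Phi K (ξ t) k + r t k) (Set.Ici T) t)
    (hrcont : ∀ k : Fin K, ContinuousOn (fun t => r t k) (Set.Ici T))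
    (hbound : ∀ t ≥ T, Real.sqrt (∑ k, ξ t k ^ 2) ≤ M)
    (hr : ∀ t ≥ T, Real.sqrt (∑ k, r t k ^ 2) ≤ Cθ * t ^ (-θ))
    (hproj : ∀ t ≥ T, |∑ k, ξ t k * (1 / Real.sqrt K)| ≤ Cθ * t ^ (-θ + 1)) :
    ∃ C' > 0, ∀ t ≥ T, Real.sqrt (∑ k, ξ t k ^ 2) ≤ C' * t ^ (-θ + 1) := by
  have hK1 : 1 ≤ K := by omega
  set f : ℝ → ℝ := fun t => ∑ k, ξ t k ^ 2 with hfdef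
  set F' : ℝ → ℝ := fun t => ∑ k, 2 * ξ t k * (t⁻¹ * Phi K (ξ t) k + r t k) with hF'def
  have hf0 : ∀ t, 0 ≤ f t := fun t => Finset.sum_nonneg fun k _ => sq_nonneg _
  have hfd : ∀ t ≥ T, HasDerivWithinAt f (F' t) (Set.Ici T) t := by
    intro t ht
    have h := HasDerivWithinAt.sum (u := Finset.univ)
      (fun k (_ : k ∈ Finset.univ) => (hderiv t ht k).pow 2)
    have e : ∑ k, (2:ℕ) * ξ t k ^ (2-1) * (t⁻¹ * Phi K (ξ t) k + r t k) = F' t := by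
      refine Finset.sum_congr rfl fun k _ => ?_
      norm_num
    rw [e] at h
    have hfeq : f = ∑ i, (fun s => ξ s i) ^ 2 := by ext s; simp [hfdef, Finset.sum_apply]
    rw [hfeq]; exact h
  have hfM : ∀ t ≥ T, f t ≤ M^2 := by
    intro t ht
    nlinarith [Real.sq_sqrt (hf0 t), Real.sqrt_nonneg (f t), hbound t ht]
  -- A generic one-stage Grönwall estimate
  have stage : ∀ T₀ ≥ T, ∀ B a : ℝ, 0 < B → 0 < a → a ≤ (1 - Real.exp (-B))/B →
      a + 1 - (2*θ-1) ≠ 0 →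
      (∀ t ≥ T₀, 2 * Real.sqrt (f t) ≤ B) →
      ∀ t ≥ T₀, t ^ a * f t
        ≤ T₀ ^ a * f T₀ - (((2*a + 1/a) * Cθ^2)/(a+1-(2*θ-1))) * T₀ ^ (a+1-(2*θ-1))
          + (((2*a + 1/a) * Cθ^2)/(a+1-(2*θ-1))) * t ^ (a+1-(2*θ-1)) := by
    intro T₀ hT₀T B a hB ha0 hac hσ hsm
    have hT₀ : 0 < T₀ := lt_of_lt_of_le hT hT₀T
    have hfd2 : ∀ t ≥ T₀, HasDerivWithinAt f (F' t) (Set.Ici T₀) t :=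
      fun t ht => (hfd t (le_trans hT₀T ht)).mono (Set.Ici_subset_Ici.mpr hT₀T)
    refine gronwall f F' T₀ a ((2*a + 1/a) * Cθ^2) (2*θ-1) hT₀ hσ hfd2 ?_
    intro t ht
    have htT : T ≤ t := le_trans hT₀T ht
    have ht0 : 0 < t := lt_of_lt_of_le hT htT
    have key := Fprime_le K hK1 (ξ t) (r t) t B a (Cθ * t^(-θ+1)) (Cθ * t^(-θ))
      ht0 hB (hsm t ht) ha0.le hac (hproj t htT) (hr t htT)
    have keyf : F' t ≤ -(2*a/t) * f t + (2*a/t) * (Cθ * t^(-θ+1))^2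
        + 2 * Real.sqrt (f t) * (Cθ * t^(-θ)) := key
    have htneg : 0 < t^(-θ) := Real.rpow_pos_of_pos ht0 _
    -- Young's inequality : 2 √f R ≤ (a/t) f + (t/a) R²
    have young : 2 * Real.sqrt (f t) * (Cθ * t^(-θ))
        ≤ (a/t) * f t + (t/a) * (Cθ * t^(-θ))^2 := by
      have h5 : 2 * (Real.sqrt (a/t) * Real.sqrt (f t)) * (Real.sqrt (t/a) * (Cθ * t^(-θ)))
          ≤ (Real.sqrt (a/t) * Real.sqrt (f t))^2 + (Real.sqrt (t/a) * (Cθ * t^(-θ)))^2 :=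
        two_mul_le_add_sq _ _
      have e1 : Real.sqrt (a/t)^2 = a/t := Real.sq_sqrt (by positivity)
      have e2 : Real.sqrt (t/a)^2 = t/a := Real.sq_sqrt (by positivity)
      have e3 : Real.sqrt (a/t) * Real.sqrt (t/a) = 1 := by
        rw [← Real.sqrt_mul (by positivity), show (a/t)*(t/a) = 1 by field_simp]
        exact Real.sqrt_one
      have e4 : Real.sqrt (f t)^2 = f t := Real.sq_sqrt (hf0 t)
      calc 2 * Real.sqrt (f t) * (Cθ * t^(-θ))
          = (Real.sqrt (a/t) * Real.sqrt (t/a))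
              * (2 * Real.sqrt (f t) * (Cθ * t^(-θ))) := by rw [e3, one_mul]
        _ = 2 * (Real.sqrt (a/t) * Real.sqrt (f t))
              * (Real.sqrt (t/a) * (Cθ * t^(-θ))) := by ring
        _ ≤ (Real.sqrt (a/t) * Real.sqrt (f t))^2
              + (Real.sqrt (t/a) * (Cθ * t^(-θ)))^2 := h5
        _ = (a/t) * f t + (t/a) * (Cθ * t^(-θ))^2 := by
            rw [mul_pow, mul_pow, e1, e2, e4]
    have hmulA : t^(-θ+1) * t^(-θ+1) * t⁻¹ = t^(-(2*θ-1)) := by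
      rw [show t⁻¹ = t^(-1:ℝ) from (Real.rpow_neg_one t).symm,
        ← Real.rpow_add ht0, ← Real.rpow_add ht0]
      congr 1; ring
    have hmulB : t * (t^(-θ) * t^(-θ)) = t^(-(2*θ-1)) := by
      rw [← Real.rpow_add ht0 (-θ) (-θ),
        show (t:ℝ) * t^(-θ + -θ) = t^(1:ℝ) * t^(-θ + -θ) by rw [Real.rpow_one],
        ← Real.rpow_add ht0]
      congr 1; ring
    have e5 : (2*a/t)*(Cθ*t^(-θ+1))^2 = 2*a*Cθ^2 * t^(-(2*θ-1)) := by
      rw [← hmulA]; field_simp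
    have e6 : (t/a) * (Cθ*t^(-θ))^2 = (1/a)*Cθ^2 * t^(-(2*θ-1)) := by
      rw [← hmulB]; field_simp
    have e7 : ((2*a + 1/a) * Cθ^2) * t^(-(2*θ-1))
        = 2*a*Cθ^2 * t^(-(2*θ-1)) + (1/a)*Cθ^2 * t^(-(2*θ-1)) := by ring
    have e8 : 0 ≤ (a/t) * f t := mul_nonneg (by positivity) (hf0 t)
    have e9 : -(2*a/t) * f t = -(a/t) * f t - a/t * f t := by ring
    rw [e7]
    linarith [keyf, young, e5, e6, e9, e8]
  -- Stage 1
  obtain ⟨B₁, hB₁, hB₁M⟩ : ∃ B, 0 < B ∧ 2*M + 1 ≤ B := ⟨2*M+1, by linarith, le_rfl⟩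
  obtain ⟨a₁, ha₁0, ha₁c, ha₁θ⟩ :
      ∃ a, 0 < a ∧ a ≤ (1 - Real.exp (-B₁))/B₁ ∧ a ≤ (θ-1)/2 := by
    refine ⟨min (Real.exp (-B₁)) ((θ-1)/2), lt_min (Real.exp_pos _) (by linarith),
      le_trans (min_le_left _ _) (exp_le_c2 B₁ hB₁), min_le_right _ _⟩
  have hσ1 : a₁ + 1 - θ < 0 := by linarith
  have hineq1 : ∀ t ≥ T, F' t ≤ -(a₁/t) * f t
      + (2*a₁*Cθ^2*T^(-θ+1) + 2*M*Cθ) * t^(-θ) := by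
    intro t ht
    have ht0 : 0 < t := lt_of_lt_of_le hT ht
    have hx2B : 2 * Real.sqrt (f t) ≤ B₁ := by
      have := hbound t ht; linarith
    have key := Fprime_le K hK1 (ξ t) (r t) t B₁ a₁ (Cθ * t^(-θ+1)) (Cθ * t^(-θ))
      ht0 hB₁ hx2B ha₁0.le ha₁c (hproj t ht) (hr t ht)
    have keyf : F' t ≤ -(2*a₁/t) * f t + (2*a₁/t) * (Cθ * t^(-θ+1))^2
        + 2 * Real.sqrt (f t) * (Cθ * t^(-θ)) := key
    have htneg : 0 < t^(-θ) := Real.rpow_pos_of_pos ht0 _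
    have htneg1 : 0 < t^(-θ+1) := Real.rpow_pos_of_pos ht0 _
    have hmul : t^(-θ+1) * t⁻¹ = t^(-θ) := by
      rw [show t⁻¹ = t^(-1:ℝ) from (Real.rpow_neg_one t).symm, ← Real.rpow_add ht0]
      congr 1; ring
    have e2 : (2*a₁/t)*(Cθ*t^(-θ+1))^2 = (2*a₁*Cθ^2*t^(-θ+1)) * t^(-θ) := by
      rw [← hmul]; ring
    have hTt : t^(-θ+1) ≤ T^(-θ+1) :=
      Real.rpow_le_rpow_of_nonpos hT ht (by linarith)
    have e3 : (2*a₁*Cθ^2*t^(-θ+1)) * t^(-θ) ≤ (2*a₁*Cθ^2*T^(-θ+1)) * t^(-θ) := by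
      apply mul_le_mul_of_nonneg_right _ htneg.le
      exact mul_le_mul_of_nonneg_left hTt
        (mul_nonneg (by linarith : (0:ℝ) ≤ 2*a₁) (sq_nonneg Cθ))
    have e4 : 2 * Real.sqrt (f t) * (Cθ * t^(-θ)) ≤ 2*M*Cθ*t^(-θ) := by
      have h5 := hbound t ht
      have h6 : (2 * Real.sqrt (f t)) * (Cθ * t^(-θ)) ≤ (2*M) * (Cθ * t^(-θ)) :=
        mul_le_mul_of_nonneg_right (by linarith) (mul_nonneg hCθ.le htneg.le)
      nlinarith [h6]
    have e5 : 0 ≤ a₁/t * f t := mul_nonneg (by positivity) (hf0 t)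
    have e9 : -(2*a₁/t) * f t = -(a₁/t) * f t - a₁/t * f t := by ring
    linarith [keyf, e2, e3, e4, e5, e9]
  have hgr1 := gronwall f F' T a₁ (2*a₁*Cθ^2*T^(-θ+1) + 2*M*Cθ) θ hT
    (ne_of_lt hσ1) hfd hineq1
  obtain ⟨D₁, hD₁0, hstage1⟩ : ∃ D, 0 ≤ D ∧ ∀ t ≥ T, f t ≤ D * t^(-a₁) := by
    have hTa : 0 < T^a₁ := Real.rpow_pos_of_pos hT _
    have hTpow : (0:ℝ) < T^(-θ+1) := Real.rpow_pos_of_pos hT _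
    have hE₁0 : 0 ≤ 2*a₁*Cθ^2*T^(-θ+1) + 2*M*Cθ := by
      have t2 : (0:ℝ) ≤ 2*a₁*Cθ^2 := mul_nonneg (by linarith) (sq_nonneg _)
      have t3 : (0:ℝ) ≤ 2*a₁*Cθ^2*T^(-θ+1) := mul_nonneg t2 hTpow.le
      nlinarith
    refine ⟨T^a₁ * M^2 + ((2*a₁*Cθ^2*T^(-θ+1) + 2*M*Cθ)/(θ-1-a₁)) * T^(a₁+1-θ), ?_, ?_⟩
    · have h2 : (0:ℝ) < T^(a₁+1-θ) := Real.rpow_pos_of_pos hT _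
      have h3 : 0 < θ-1-a₁ := by linarith
      have h4 : 0 ≤ (2*a₁*Cθ^2*T^(-θ+1) + 2*M*Cθ)/(θ-1-a₁) := div_nonneg hE₁0 h3.le
      nlinarith [sq_nonneg M]
    · intro t ht
      have ht0 : 0 < t := lt_of_lt_of_le hT ht
      have h := hgr1 t ht
      have hEσ : (2*a₁*Cθ^2*T^(-θ+1) + 2*M*Cθ)/(a₁+1-θ) ≤ 0 :=
        div_nonpos_of_nonneg_of_nonpos hE₁0 (by linarith)
      have htσ : 0 < t^(a₁+1-θ) := Real.rpow_pos_of_pos ht0 _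
      have h6 : ((2*a₁*Cθ^2*T^(-θ+1) + 2*M*Cθ)/(a₁+1-θ)) * t^(a₁+1-θ) ≤ 0 :=
        mul_nonpos_of_nonpos_of_nonneg hEσ htσ.le
      have h7 : -((2*a₁*Cθ^2*T^(-θ+1) + 2*M*Cθ)/(a₁+1-θ))
          = (2*a₁*Cθ^2*T^(-θ+1) + 2*M*Cθ)/(θ-1-a₁) := by
        rw [show θ-1-a₁ = -(a₁+1-θ) by ring, div_neg]
      have h9 : T^a₁ * f T ≤ T^a₁ * M^2 :=
        mul_le_mul_of_nonneg_left (hfM T le_rfl) hTa.le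
      have h8 : t^a₁ * f t ≤ T^a₁ * M^2
          + ((2*a₁*Cθ^2*T^(-θ+1) + 2*M*Cθ)/(θ-1-a₁)) * T^(a₁+1-θ) := by
        rw [← h7]; linarith
      have hta : 0 < t^a₁ := Real.rpow_pos_of_pos ht0 _
      calc f t = (t^a₁ * f t) / t^a₁ := by field_simp
        _ ≤ (T^a₁ * M^2
            + ((2*a₁*Cθ^2*T^(-θ+1) + 2*M*Cθ)/(θ-1-a₁)) * T^(a₁+1-θ)) / t^a₁ := by
            gcongr
        _ = _ := by rw [Real.rpow_neg ht0.le, div_eq_mul_inv]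
  -- f t → 0 : choose T₁ with f small beyond T₁
  have hdecay : ∀ η > (0:ℝ), ∃ T₁ ≥ T, ∀ t ≥ T₁, f t ≤ η := by
    intro η hη
    have hexp : -a₁ < 0 := by linarith
    refine ⟨max T ((η/(D₁+1)) ^ ((-a₁)⁻¹)), le_max_left _ _, ?_⟩
    intro t ht
    have htT : T ≤ t := le_trans (le_max_left _ _) ht
    have ht0 : 0 < t := lt_of_lt_of_le hT htT
    have hbase : (0:ℝ) < η/(D₁+1) := div_pos hη (by linarith)
    have h1 : (η/(D₁+1)) ^ ((-a₁)⁻¹) ≤ t := le_trans (le_max_right _ _) ht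
    have h2 : 0 < (η/(D₁+1)) ^ ((-a₁)⁻¹) := Real.rpow_pos_of_pos hbase _
    have h3 : t ^ (-a₁) ≤ ((η/(D₁+1)) ^ ((-a₁)⁻¹)) ^ (-a₁) :=
      Real.rpow_le_rpow_of_nonpos h2 h1 hexp.le
    have h4 : ((η/(D₁+1)) ^ ((-a₁)⁻¹)) ^ (-a₁) = η/(D₁+1) := by
      rw [← Real.rpow_mul hbase.le, inv_mul_cancel₀ (ne_of_lt hexp), Real.rpow_one]
    have h5 := hstage1 t htT
    have h6 : D₁ * t^(-a₁) ≤ D₁ * (η/(D₁+1)) := by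
      apply mul_le_mul_of_nonneg_left _ hD₁0
      rw [← h4]; exact h3
    have h7 : D₁ * (η/(D₁+1)) ≤ η := by
      rw [← mul_div_assoc, div_le_iff₀ (by linarith : (0:ℝ) < D₁+1)]
      nlinarith
    linarith
  -- Stage 2
  have hq0 : (0:ℝ) < θ - 1/2 := by linarith
  have hq1 : θ - 1/2 < 1 := by linarith
  obtain ⟨B₂, hB₂, hB₂q⟩ : ∃ B, 0 < B ∧ θ - 1/2 ≤ (1 - Real.exp (-B))/B := by
    refine ⟨-Real.log (θ - 1/2), ?_, ?_⟩
    · have := Real.log_neg hq0 hq1; linarith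
    · have e : Real.exp (-(-Real.log (θ - 1/2))) = θ - 1/2 := by
        rw [neg_neg, Real.exp_log hq0]
      calc θ - 1/2 = Real.exp (-(-Real.log (θ - 1/2))) := e.symm
        _ ≤ (1 - Real.exp (-(-Real.log (θ - 1/2))))/(-Real.log (θ - 1/2)) :=
            exp_le_c2 _ (by have := Real.log_neg hq0 hq1; linarith)
  obtain ⟨T₁, hT₁T, hsm2⟩ : ∃ T₁ ≥ T, ∀ t ≥ T₁, 2 * Real.sqrt (f t) ≤ B₂ := by
    obtain ⟨T₁, hT₁T, hs⟩ := hdecay ((B₂/2)^2) (by positivity)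
    refine ⟨T₁, hT₁T, fun t ht => ?_⟩
    have h1 : Real.sqrt (f t) ≤ B₂/2 := by
      rw [show B₂/2 = Real.sqrt ((B₂/2)^2) from (Real.sqrt_sq (by linarith)).symm]
      exact Real.sqrt_le_sqrt (hs t ht)
    linarith
  have hT₁0 : 0 < T₁ := lt_of_lt_of_le hT hT₁T
  have hσ2 : 0 < (θ - 1/2) + 1 - (2*θ-1) := by linarith
  have hst2 := stage T₁ hT₁T B₂ (θ - 1/2) hB₂ hq0 hB₂q (ne_of_gt hσ2) hsm2
  -- convert to f t ≤ C₂ t^{2-2θ}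
  obtain ⟨C₂, hC₂0, hstage2⟩ : ∃ C, 0 ≤ C ∧ ∀ t ≥ T₁, f t ≤ C * t^(2-2*θ) := by
    have hTq : 0 < T₁^(θ-1/2) := Real.rpow_pos_of_pos hT₁0 _
    have hE0 : 0 ≤ (2*(θ-1/2) + 1/(θ-1/2)) * Cθ^2 := by positivity
    have hEσ : 0 ≤ ((2*(θ-1/2) + 1/(θ-1/2)) * Cθ^2)/((θ-1/2)+1-(2*θ-1)) :=
      div_nonneg hE0 hσ2.le
    refine ⟨T₁^(θ-1/2) * M^2 * (T₁^(-(θ-1/2)) * T₁^(2*θ-2))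
        + ((2*(θ-1/2) + 1/(θ-1/2)) * Cθ^2)/((θ-1/2)+1-(2*θ-1)), ?_, ?_⟩
    · have h2 : 0 < T₁^(-(θ-1/2)) := Real.rpow_pos_of_pos hT₁0 _
      have h3 : 0 < T₁^(2*θ-2) := Real.rpow_pos_of_pos hT₁0 _
      have h4 : 0 ≤ M^2 := sq_nonneg M
      positivity
    · intro t ht
      have ht0 : 0 < t := lt_of_lt_of_le hT₁0 ht
      have h := hst2 t ht
      have hta : 0 < t^(θ-1/2) := Real.rpow_pos_of_pos ht0 _
      have htσ : 0 < t^((θ-1/2)+1-(2*θ-1)) := Real.rpow_pos_of_pos ht0 _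
      have ht2 : 0 < t^(2-2*θ) := Real.rpow_pos_of_pos ht0 _
      have hfT : T₁^(θ-1/2) * f T₁ ≤ T₁^(θ-1/2) * M^2 :=
        mul_le_mul_of_nonneg_left (hfM T₁ hT₁T) hTq.le
      have hTσ : 0 < T₁^((θ-1/2)+1-(2*θ-1)) := Real.rpow_pos_of_pos hT₁0 _
      have h8 : t^(θ-1/2) * f t ≤ T₁^(θ-1/2) * M^2
          + ((2*(θ-1/2) + 1/(θ-1/2)) * Cθ^2)/((θ-1/2)+1-(2*θ-1))
              * t^((θ-1/2)+1-(2*θ-1)) := by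
        have hd : 0 ≤ ((2*(θ-1/2) + 1/(θ-1/2)) * Cθ^2)/((θ-1/2)+1-(2*θ-1))
            * T₁^((θ-1/2)+1-(2*θ-1)) := mul_nonneg hEσ hTσ.le
        nlinarith [h]
      have h9 : f t ≤ T₁^(θ-1/2) * M^2 * (t^(θ-1/2))⁻¹
          + ((2*(θ-1/2) + 1/(θ-1/2)) * Cθ^2)/((θ-1/2)+1-(2*θ-1))
              * (t^((θ-1/2)+1-(2*θ-1)) * (t^(θ-1/2))⁻¹) := by
        calc f t = t^(θ-1/2) * f t / t^(θ-1/2) := by field_simp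
          _ ≤ (T₁^(θ-1/2) * M^2
              + ((2*(θ-1/2) + 1/(θ-1/2)) * Cθ^2)/((θ-1/2)+1-(2*θ-1))
                  * t^((θ-1/2)+1-(2*θ-1))) / t^(θ-1/2) := by gcongr
          _ = _ := by rw [add_div]; ring
      have e1 : t^((θ-1/2)+1-(2*θ-1)) * (t^(θ-1/2))⁻¹ = t^(2-2*θ) := by
        rw [← Real.rpow_neg ht0.le, ← Real.rpow_add ht0]
        ring_nf
      have e2 : (t^(θ-1/2))⁻¹ = t^(2-2*θ) * t^(-(θ-1/2)-(2-2*θ)) := by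
        rw [← Real.rpow_neg ht0.le, ← Real.rpow_add ht0]
        ring_nf
      have e3 : t^(-(θ-1/2)-(2-2*θ)) ≤ T₁^(-(θ-1/2)) * T₁^(2*θ-2) := by
        rw [← Real.rpow_add hT₁0]
        have : -(θ-1/2) + (2*θ-2) = -(θ-1/2)-(2-2*θ) := by ring
        rw [this]
        exact Real.rpow_le_rpow_of_nonpos hT₁0 ht (by linarith)
      rw [e1, e2] at h9
      have hA0 : (0:ℝ) ≤ T₁^(θ-1/2) * M^2 := mul_nonneg hTq.le (sq_nonneg M)
      calc f t ≤ T₁^(θ-1/2) * M^2 * (t^(2-2*θ) * t^(-(θ-1/2)-(2-2*θ)))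
          + ((2*(θ-1/2) + 1/(θ-1/2)) * Cθ^2)/((θ-1/2)+1-(2*θ-1)) * t^(2-2*θ) := h9
        _ ≤ T₁^(θ-1/2) * M^2 * (t^(2-2*θ) * (T₁^(-(θ-1/2)) * T₁^(2*θ-2)))
          + ((2*(θ-1/2) + 1/(θ-1/2)) * Cθ^2)/((θ-1/2)+1-(2*θ-1)) * t^(2-2*θ) := by
            have := mul_le_mul_of_nonneg_left
              (mul_le_mul_of_nonneg_left e3 ht2.le) hA0
            linarith
        _ = _ := by ring
  -- Conclusion
  refine ⟨max (Real.sqrt C₂) (M * T₁^(θ-1)) + 1, by positivity, ?_⟩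
  intro t ht
  have ht0 : 0 < t := lt_of_lt_of_le hT ht
  have htp : 0 < t^(-θ+1) := Real.rpow_pos_of_pos ht0 _
  have hCmax : Real.sqrt C₂ ≤ max (Real.sqrt C₂) (M * T₁^(θ-1)) + 1 := by
    have := le_max_left (Real.sqrt C₂) (M * T₁^(θ-1)); linarith
  have hMmax : M * T₁^(θ-1) ≤ max (Real.sqrt C₂) (M * T₁^(θ-1)) + 1 := by
    have := le_max_right (Real.sqrt C₂) (M * T₁^(θ-1)); linarith
  rcases le_or_gt T₁ t with h | h
  · have h1 := hstage2 t h
    have h2 : Real.sqrt (f t) ≤ Real.sqrt (C₂ * t^(2-2*θ)) := Real.sqrt_le_sqrt h1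
    have hsq : Real.sqrt (t^(2-2*θ)) = t^(-θ+1) := by
      rw [show t^(2-2*θ) = (t^(-θ+1))^2 by
        rw [← Real.rpow_natCast (t^(-θ+1)) 2, ← Real.rpow_mul ht0.le]
        norm_num
        ring_nf]
      exact Real.sqrt_sq (Real.rpow_nonneg ht0.le _)
    rw [Real.sqrt_mul hC₂0, hsq] at h2
    calc Real.sqrt (f t) ≤ Real.sqrt C₂ * t^(-θ+1) := h2
      _ ≤ (max (Real.sqrt C₂) (M * T₁^(θ-1)) + 1) * t^(-θ+1) :=
          mul_le_mul_of_nonneg_right hCmax htp.le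
  · have h1 : Real.sqrt (f t) ≤ M := hbound t ht
    have h2 : T₁^(-θ+1) ≤ t^(-θ+1) :=
      Real.rpow_le_rpow_of_nonpos ht0 h.le (by linarith)
    have h3 : T₁^(θ-1) * T₁^(-θ+1) = 1 := by
      rw [← Real.rpow_add hT₁0]
      norm_num
    have hT₁p : 0 < T₁^(θ-1) := Real.rpow_pos_of_pos hT₁0 _
    have h4 : M ≤ M * T₁^(θ-1) * t^(-θ+1) := by
      calc M = M * (T₁^(θ-1) * T₁^(-θ+1)) := by rw [h3, mul_one]
        _ ≤ M * (T₁^(θ-1) * t^(-θ+1)) := by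
            apply mul_le_mul_of_nonneg_left _ hM.le
            exact mul_le_mul_of_nonneg_left h2 hT₁p.le
        _ = M * T₁^(θ-1) * t^(-θ+1) := by ring
    calc Real.sqrt (f t) ≤ M * T₁^(θ-1) * t^(-θ+1) := le_trans h1 h4
      _ ≤ (max (Real.sqrt C₂) (M * T₁^(θ-1)) + 1) * t^(-θ+1) :=
          mul_le_mul_of_nonneg_right hMmax htp.le
end

section
/- Let ε > 0 and a ∈ ℝ. There is no twice differentiable function M : [a, ∞) → ℝ with M(t) > 0 for all t ≥ a, such that M'(t) → +∞ as t → ∞ and (1+ε)·(M'(t))² ≤ M''(t)·M(t) for all t ≥ a. -/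
theorem no_convex_blowup_function (ε a : ℝ) (hε : 0 < ε) :
    ¬ ∃ M M' M'' : ℝ → ℝ,
      (∀ t ≥ a, 0 < M t) ∧
      (∀ t ≥ a, HasDerivAt M (M' t) t) ∧
      (∀ t ≥ a, HasDerivAt M' (M'' t) t) ∧
      Filter.Tendsto M' Filter.atTop Filter.atTop ∧
      (∀ t ≥ a, (1 + ε) * M' t ^ 2 ≤ M'' t * M t) := by
  rintro ⟨M, M', M'', hpos, hM', hM'', htend, hineq⟩
  obtain ⟨T, hT⟩ := (htend.eventually_ge_atTop 1).exists_forall_of_atTop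
  set b := max a T with hb
  have hba : a ≤ b := le_max_left _ _
  have hbT : T ≤ b := le_max_right _ _
  set g : ℝ → ℝ := fun t => M t ^ (-ε) with hg
  set G' : ℝ → ℝ := fun t => M' t * -ε * M t ^ (-ε - 1) with hG'
  set G'' : ℝ → ℝ := fun t =>
    M'' t * -ε * M t ^ (-ε - 1) +
      M' t * -ε * (M' t * (-ε - 1) * M t ^ (-ε - 1 - 1)) with hG''
  have hgd : ∀ t, a ≤ t → HasDerivAt g (G' t) t := fun t ht =>
    (hM' t ht).rpow_const (Or.inl (ne_of_gt (hpos t ht)))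
  have hg'd : ∀ t, a ≤ t → HasDerivAt G' (G'' t) t := by
    intro t ht
    have h1 : HasDerivAt (fun s => M' s * -ε) (M'' t * -ε) t :=
      (hM'' t ht).mul_const _
    have h2 : HasDerivAt (fun s => M s ^ (-ε - 1)) (M' t * (-ε - 1) * M t ^ (-ε - 1 - 1)) t :=
      (hM' t ht).rpow_const (Or.inl (ne_of_gt (hpos t ht)))
    exact h1.mul h2
  have hG''le : ∀ t, a ≤ t → G'' t ≤ 0 := by
    intro t ht
    have hMt := hpos t ht
    have h2 : (0:ℝ) < M t ^ (-ε - 1 - 1) := Real.rpow_pos_of_pos hMt _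
    have key : G'' t = -ε * M t ^ (-ε - 1 - 1) * (M'' t * M t - (1 + ε) * M' t ^ 2) := by
      have e1 : M t ^ (-ε - 1) = M t ^ (-ε - 1 - 1) * M t := by
        rw [← Real.rpow_add_one (ne_of_gt hMt)]; ring_nf
      simp only [hG'', e1]; ring
    have h1 : (0:ℝ) ≤ M'' t * M t - (1 + ε) * M' t ^ 2 := by
      have := hineq t ht; linarith
    nlinarith [mul_nonneg (mul_nonneg hε.le h2.le) h1]
  have hanti : AntitoneOn G' (Set.Ici b) := by
    apply antitoneOn_of_hasDerivWithinAt_nonpos (convex_Ici b)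
    · exact fun x hx => (hg'd x (hba.trans hx)).continuousAt.continuousWithinAt
    · intro x hx
      rw [interior_Ici] at hx
      exact ((hg'd x (hba.trans hx.le)).hasDerivWithinAt)
    · intro x hx
      rw [interior_Ici] at hx
      exact hG''le x (hba.trans hx.le)
  have hanti2 : AntitoneOn (fun t => g t - G' b * t) (Set.Ici b) := by
    apply antitoneOn_of_hasDerivWithinAt_nonpos (convex_Ici b)
      (f' := fun t => G' t - G' b)
    · intro x hx
      exact ((hgd x (hba.trans hx)).continuousAt.sub
        (continuous_const.mul continuous_id).continuousAt).continuousWithinAt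
    · intro x hx
      rw [interior_Ici] at hx
      exact (((hgd x (hba.trans hx.le)).sub
        ((hasDerivAt_id x).const_mul (G' b))).hasDerivWithinAt).congr_deriv (by ring)
    · intro x hx
      rw [interior_Ici] at hx
      have := hanti (Set.self_mem_Ici) (Set.mem_Ici.mpr hx.le) hx.le
      linarith
  have hMb := hpos b hba
  have hG'b : G' b < 0 := by
    have h1 : (1:ℝ) ≤ M' b := hT b hbT
    have h2 : (0:ℝ) < M b ^ (-ε - 1) := Real.rpow_pos_of_pos hMb _
    have h3 : 0 < M' b * ε * M b ^ (-ε - 1) :=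
      mul_pos (mul_pos (lt_of_lt_of_le one_pos h1) hε) h2
    have h4 : G' b = -(M' b * ε * M b ^ (-ε - 1)) := by rw [hG']; ring
    rw [h4]; linarith
  have hgbpos : 0 < g b := Real.rpow_pos_of_pos hMb _
  have hden : 0 < -G' b := by linarith
  obtain ⟨t, htb, hGt⟩ : ∃ t, b ≤ t ∧ G' b * (t - b) = -(g b + 1) := by
    refine ⟨b + (g b + 1) / (-G' b), ?_, ?_⟩
    · have h0 : 0 ≤ (g b + 1) / (-G' b) := div_nonneg (by linarith) hden.le
      linarith
    · rw [add_sub_cancel_left]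
      field_simp
      rw [div_self (ne_of_lt hG'b)]
  have hle := hanti2 Set.self_mem_Ici htb htb
  simp only at hle
  have hgt : 0 < g t := Real.rpow_pos_of_pos (hpos t (hba.trans htb)) _
  have h5 : G' b * t - G' b * b = -(g b + 1) := by linear_combination hGt
  linarith
end
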